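/- arXiv:1602.03399 — 7 statements merged into one kernel-verified Lean document; each statement's English description precedes it below -/
import Mathlib

section
/- For real numbers p, q > 1 with p + q > 3, the sum over n ≥ 1 of (ζ(p) − Σ_{i=1}^n 1/i^p)(ζ(q) − Σ_{j=1}^n 1/j^q) equals ζ(p, q−1) + ζ(q, p−1) + ζ(p+q−1) − ζ(p)ζ(q). -/
open scoped BigOperators

/-- Riemann zeta as a real series: `ζ(p) = Σ_{n≥1} 1/n^p`. -/
noncomputable def rzeta (p : ℝ) : ℝ := ∑' n : ℕ, 1 / (n + 1 : ℝ) ^ p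

/-- Double zeta value `ζ(a,b) = Σ_{m>n≥1} 1/(m^a n^b)`. -/
noncomputable def zeta2 (a b : ℝ) : ℝ :=
  ∑' q : {q : ℕ × ℕ // q.2 < q.1 ∧ 0 < q.2},
    1 / ((q.1.1 : ℝ) ^ a * (q.1.2 : ℝ) ^ b)

/-- Triple zeta value `ζ(a,b,c) = Σ_{l>m>n≥1} 1/(l^a m^b n^c)`. -/
noncomputable def zeta3 (a b c : ℝ) : ℝ :=
  ∑' t : {t : ℕ × ℕ × ℕ // t.2.1 < t.1 ∧ t.2.2 < t.2.1 ∧ 0 < t.2.2},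
    1 / ((t.1.1 : ℝ) ^ a * (t.1.2.1 : ℝ) ^ b * (t.1.2.2 : ℝ) ^ c)

/-- Tail of the zeta series: `ζ(p) − Σ_{i=1}^n 1/i^p`. -/
noncomputable def zetaTail (p : ℝ) (n : ℕ) : ℝ :=
  rzeta p - ∑ i ∈ Finset.range n, 1 / (i + 1 : ℝ) ^ p

/-- Polylogarithm `Li_p(z) = Σ_{j≥1} z^j / j^p`. -/
noncomputable def polyLog (p : ℝ) (z : ℝ) : ℝ :=
  ∑' j : ℕ, z ^ (j + 1) / (j + 1 : ℝ) ^ p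

open scoped ENNReal

namespace ZetaAux

noncomputable def Ae (r : ℝ) (n : ℕ) : ℝ≥0∞ := ENNReal.ofReal (1 / ((n : ℝ) + 1) ^ r)

lemma base_pos (n : ℕ) : (0:ℝ) < (n:ℝ) + 1 := by positivity

lemma rpow_base_pos (r : ℝ) (n : ℕ) : (0:ℝ) < ((n:ℝ) + 1) ^ r :=
  Real.rpow_pos_of_pos (base_pos n) r

lemma Ae_mul (r s : ℝ) (n : ℕ) : Ae r n * Ae s n = Ae (r + s) n := by
  unfold Ae
  rw [← ENNReal.ofReal_mul (by positivity)]
  congr 1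
  rw [Real.rpow_add (base_pos n), div_mul_div_comm, one_mul]

lemma Ae_pred (r : ℝ) (n : ℕ) : ((n : ℝ≥0∞) + 1) * Ae r n = Ae (r - 1) n := by
  unfold Ae
  have h1 : ((n : ℝ≥0∞) + 1) = ENNReal.ofReal ((n : ℝ) + 1) := by
    rw [ENNReal.ofReal_add (by positivity) zero_le_one]
    simp
  rw [h1, ← ENNReal.ofReal_mul (by positivity)]
  congr 1
  rw [Real.rpow_sub (base_pos n), Real.rpow_one, one_div_div, mul_one_div]

lemma AeAe_congr {a b : ℝ} {i j i' j' : ℕ} (h1 : i = i') (h2 : j = j') :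
    Ae a i * Ae b j = Ae a i' * Ae b j' := by rw [h1, h2]

/-! ### Summability and real/ENNReal conversions -/

lemma summable_shift {r : ℝ} (hr : 1 < r) : Summable (fun n : ℕ => 1 / ((n : ℝ) + 1) ^ r) := by
  have h := Real.summable_one_div_nat_rpow.mpr hr
  have h2 := (summable_nat_add_iff 1).mpr h
  refine h2.congr fun n => ?_
  push_cast
  ring_nf

noncomputable def ZR (r : ℝ) : ℝ≥0∞ := ∑' n : ℕ, Ae r n
noncomputable def Te (r : ℝ) (m : ℕ) : ℝ≥0∞ := ∑' i : ℕ, Ae r (i + m)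
noncomputable def Z2E (a b : ℝ) : ℝ≥0∞ := ∑' x : ℕ × ℕ, Ae a (x.2 + x.1 + 1) * Ae b x.2

lemma rzeta_nonneg (r : ℝ) : 0 ≤ rzeta r :=
  tsum_nonneg fun n => by positivity

lemma ZR_eq {r : ℝ} (hr : 1 < r) : ZR r = ENNReal.ofReal (rzeta r) := by
  unfold ZR rzeta Ae
  exact (ENNReal.ofReal_tsum_of_nonneg (fun n => by positivity) (summable_shift hr)).symm

lemma ZR_ne_top {r : ℝ} (hr : 1 < r) : ZR r ≠ ⊤ := by
  rw [ZR_eq hr]; exact ENNReal.ofReal_ne_top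

lemma ZR_toReal {r : ℝ} (hr : 1 < r) : (ZR r).toReal = rzeta r := by
  rw [ZR_eq hr, ENNReal.toReal_ofReal (rzeta_nonneg r)]

lemma zetaTail_eq {r : ℝ} (hr : 1 < r) (m : ℕ) :
    zetaTail r m = ∑' i : ℕ, 1 / (((i + m : ℕ) : ℝ) + 1) ^ r := by
  have h := (summable_shift hr).sum_add_tsum_nat_add (f := fun n : ℕ => 1 / ((n : ℝ) + 1) ^ r) m
  unfold zetaTail rzeta
  rw [← h]
  ring

lemma zetaTail_nonneg {r : ℝ} (hr : 1 < r) (m : ℕ) : 0 ≤ zetaTail r m := by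
  rw [zetaTail_eq hr m]
  exact tsum_nonneg fun i => by positivity

lemma Te_eq {r : ℝ} (hr : 1 < r) (m : ℕ) : Te r m = ENNReal.ofReal (zetaTail r m) := by
  rw [zetaTail_eq hr m]
  unfold Te Ae
  rw [ENNReal.ofReal_tsum_of_nonneg (fun i => by positivity)
    ((summable_nat_add_iff m).mpr (summable_shift hr))]

lemma Te_ne_top {r : ℝ} (hr : 1 < r) (m : ℕ) : Te r m ≠ ⊤ := by
  rw [Te_eq hr m]; exact ENNReal.ofReal_ne_top

/-! ### Generic ENNReal rearrangement lemmas -/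

lemma tsum_trichotomy (f : ℕ → ℕ → ℝ≥0∞) :
    ∑' x : ℕ × ℕ, f x.1 x.2 =
      (∑' k : ℕ, f k k) + (∑' x : ℕ × ℕ, f (x.2 + x.1 + 1) x.2)
        + (∑' x : ℕ × ℕ, f x.2 (x.2 + x.1 + 1)) := by
  have hsplit : ∀ x : ℕ × ℕ, f x.1 x.2 =
      ((if x.1 = x.2 then f x.1 x.2 else 0) + (if x.2 < x.1 then f x.1 x.2 else 0))
        + (if x.1 < x.2 then f x.1 x.2 else 0) := by
    intro x
    rcases lt_trichotomy x.1 x.2 with h | h | h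
    · rw [if_neg (by omega), if_neg (by omega), if_pos h, zero_add, zero_add]
    · rw [if_pos h, if_neg (by omega), if_neg (by omega), add_zero, add_zero]
    · rw [if_neg (by omega), if_pos h, if_neg (by omega), zero_add, add_zero]
  have hdiag : ∑' x : ℕ × ℕ, (if x.1 = x.2 then f x.1 x.2 else 0) = ∑' k : ℕ, f k k := by
    have hinj : Function.Injective (fun k : ℕ => ((k, k) : ℕ × ℕ)) := by
      intro a b h
      simpa using congrArg Prod.fst h
    have hsupp : Function.support (fun x : ℕ × ℕ => if x.1 = x.2 then f x.1 x.2 else 0)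
        ⊆ Set.range (fun k : ℕ => ((k, k) : ℕ × ℕ)) := by
      intro x hx
      rw [Function.mem_support] at hx
      have h : x.1 = x.2 := by by_contra hc; simp [hc] at hx
      exact ⟨x.1, by ext <;> simp [h]⟩
    have := Function.Injective.tsum_eq hinj
      (f := fun x : ℕ × ℕ => if x.1 = x.2 then f x.1 x.2 else 0) hsupp
    rw [← this]
    simp
  have hgt : ∑' x : ℕ × ℕ, (if x.2 < x.1 then f x.1 x.2 else 0)
      = ∑' x : ℕ × ℕ, f (x.2 + x.1 + 1) x.2 := by
    have hinj : Function.Injective (fun x : ℕ × ℕ => ((x.2 + x.1 + 1, x.2) : ℕ × ℕ)) := by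
      intro y z h
      have h1 := congrArg Prod.fst h
      have h2 := congrArg Prod.snd h
      simp only at h1 h2
      ext <;> omega
    have hsupp : Function.support (fun x : ℕ × ℕ => if x.2 < x.1 then f x.1 x.2 else 0)
        ⊆ Set.range (fun x : ℕ × ℕ => ((x.2 + x.1 + 1, x.2) : ℕ × ℕ)) := by
      intro x hx
      rw [Function.mem_support] at hx
      have h : x.2 < x.1 := by by_contra hc; simp [hc] at hx
      exact ⟨(x.1 - x.2 - 1, x.2), by ext <;> simp <;> omega⟩
    have := Function.Injective.tsum_eq hinj
      (f := fun x : ℕ × ℕ => if x.2 < x.1 then f x.1 x.2 else 0) hsupp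
    rw [← this]
    refine tsum_congr fun x => ?_
    exact if_pos (by omega)
  have hlt : ∑' x : ℕ × ℕ, (if x.1 < x.2 then f x.1 x.2 else 0)
      = ∑' x : ℕ × ℕ, f x.2 (x.2 + x.1 + 1) := by
    have hinj : Function.Injective (fun x : ℕ × ℕ => ((x.2, x.2 + x.1 + 1) : ℕ × ℕ)) := by
      intro y z h
      have h1 := congrArg Prod.fst h
      have h2 := congrArg Prod.snd h
      simp only at h1 h2
      ext <;> omega
    have hsupp : Function.support (fun x : ℕ × ℕ => if x.1 < x.2 then f x.1 x.2 else 0)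
        ⊆ Set.range (fun x : ℕ × ℕ => ((x.2, x.2 + x.1 + 1) : ℕ × ℕ)) := by
      intro x hx
      rw [Function.mem_support] at hx
      have h : x.1 < x.2 := by by_contra hc; simp [hc] at hx
      exact ⟨(x.2 - x.1 - 1, x.1), by ext <;> simp <;> omega⟩
    have := Function.Injective.tsum_eq hinj
      (f := fun x : ℕ × ℕ => if x.1 < x.2 then f x.1 x.2 else 0) hsupp
    rw [← this]
    refine tsum_congr fun x => ?_
    exact if_pos (by omega)
  calc ∑' x : ℕ × ℕ, f x.1 x.2
      = ∑' x : ℕ × ℕ, (((if x.1 = x.2 then f x.1 x.2 else 0)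
          + (if x.2 < x.1 then f x.1 x.2 else 0)) + (if x.1 < x.2 then f x.1 x.2 else 0)) :=
        tsum_congr hsplit
    _ = (∑' x : ℕ × ℕ, ((if x.1 = x.2 then f x.1 x.2 else 0)
          + (if x.2 < x.1 then f x.1 x.2 else 0)))
          + ∑' x : ℕ × ℕ, (if x.1 < x.2 then f x.1 x.2 else 0) :=
        Summable.tsum_add ENNReal.summable ENNReal.summable
    _ = ((∑' x : ℕ × ℕ, (if x.1 = x.2 then f x.1 x.2 else 0))
          + ∑' x : ℕ × ℕ, (if x.2 < x.1 then f x.1 x.2 else 0))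
          + ∑' x : ℕ × ℕ, (if x.1 < x.2 then f x.1 x.2 else 0) := by
        rw [Summable.tsum_add ENNReal.summable ENNReal.summable]
    _ = _ := by rw [hdiag, hgt, hlt]

def antidiagEquiv : (Σ k : ℕ, Fin (k + 1)) ≃ ℕ × ℕ where
  toFun σ := (σ.2.val, σ.1 - σ.2.val)
  invFun x := ⟨x.1 + x.2, ⟨x.1, by omega⟩⟩
  left_inv := by
    rintro ⟨k, ⟨i, hi⟩⟩
    have h1 : i + (k - i) = k := by omega
    exact Sigma.ext h1 ((Fin.heq_ext_iff (congrArg (· + 1) h1)).mpr rfl)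
  right_inv := by
    rintro ⟨a, b⟩
    ext <;> simp

lemma tsum_antidiag (h : ℕ → ℝ≥0∞) :
    ∑' x : ℕ × ℕ, h (x.1 + x.2) = ∑' k : ℕ, ((k : ℝ≥0∞) + 1) * h k := by
  calc ∑' x : ℕ × ℕ, h (x.1 + x.2)
      = ∑' σ : Σ k : ℕ, Fin (k + 1), h ((antidiagEquiv σ).1 + (antidiagEquiv σ).2) :=
        (antidiagEquiv.tsum_eq (fun x : ℕ × ℕ => h (x.1 + x.2))).symm
    _ = ∑' σ : Σ k : ℕ, Fin (k + 1), h σ.1 := by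
        refine tsum_congr fun σ => ?_
        rcases σ with ⟨k, i⟩
        have hi := i.isLt
        simp only [antidiagEquiv, Equiv.coe_fn_mk]
        congr 1
        omega
    _ = ∑' k : ℕ, ∑' _i : Fin (k + 1), h k := ENNReal.tsum_sigma (fun k _ => h k)
    _ = ∑' k : ℕ, ((k : ℝ≥0∞) + 1) * h k := by
        refine tsum_congr fun k => ?_
        rw [tsum_fintype]
        simp [Finset.sum_const, nsmul_eq_mul]

/-! ### Grid and product lemmas -/

lemma grid (s t : ℝ) : (∑' x : ℕ × ℕ, Ae s x.1 * Ae t x.2) = ZR s * ZR t := by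
  unfold ZR
  calc (∑' x : ℕ × ℕ, Ae s x.1 * Ae t x.2)
      = ∑' i : ℕ, ∑' j : ℕ, Ae s i * Ae t j :=
        ENNReal.tsum_prod (f := fun i j => Ae s i * Ae t j)
    _ = ∑' i : ℕ, Ae s i * ∑' j : ℕ, Ae t j := tsum_congr fun i => ENNReal.tsum_mul_left
    _ = (∑' i : ℕ, Ae s i) * ∑' j : ℕ, Ae t j := ENNReal.tsum_mul_right

lemma Te_mul (r s : ℝ) (m : ℕ) :
    Te r m * Te s m = ∑' x : ℕ × ℕ, Ae r (x.1 + m) * Ae s (x.2 + m) := by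
  unfold Te
  calc (∑' i : ℕ, Ae r (i + m)) * (∑' j : ℕ, Ae s (j + m))
      = ∑' i : ℕ, Ae r (i + m) * ∑' j : ℕ, Ae s (j + m) := ENNReal.tsum_mul_right.symm
    _ = ∑' i : ℕ, ∑' j : ℕ, Ae r (i + m) * Ae s (j + m) :=
        tsum_congr fun i => ENNReal.tsum_mul_left.symm
    _ = _ := ENNReal.tsum_prod.symm

/-! ### zeta2 conversion -/

def z2Equiv : ℕ × ℕ ≃ {s : ℕ × ℕ // s.2 < s.1 ∧ 0 < s.2} where
  toFun x := ⟨(x.2 + x.1 + 2, x.2 + 1), by constructor <;> omega⟩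
  invFun s := (s.1.1 - s.1.2 - 1, s.1.2 - 1)
  left_inv := by
    rintro ⟨a, b⟩
    ext <;> simp <;> omega
  right_inv := by
    rintro ⟨⟨a, b⟩, h⟩
    obtain ⟨h1, h2⟩ := h
    apply Subtype.ext
    simp only
    ext <;> simp <;> omega

lemma zeta2_eq_toReal (a b : ℝ) : zeta2 a b = (Z2E a b).toReal := by
  have h1 : (∑' x : ℕ × ℕ,
        1 / (((x.2 + x.1 + 2 : ℕ) : ℝ) ^ a * ((x.2 + 1 : ℕ) : ℝ) ^ b)) = zeta2 a b := by
    unfold zeta2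
    rw [← z2Equiv.tsum_eq (fun s : {s : ℕ × ℕ // s.2 < s.1 ∧ 0 < s.2} =>
      1 / ((s.1.1 : ℝ) ^ a * (s.1.2 : ℝ) ^ b))]
    exact tsum_congr fun x => rfl
  rw [← h1]
  unfold Z2E
  rw [ENNReal.tsum_toReal_eq (f := fun x : ℕ × ℕ => Ae a (x.2 + x.1 + 1) * Ae b x.2)
    (fun x => ENNReal.mul_ne_top ENNReal.ofReal_ne_top ENNReal.ofReal_ne_top)]
  refine tsum_congr fun x => ?_
  unfold Ae
  rw [ENNReal.toReal_mul, ENNReal.toReal_ofReal (by positivity),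
    ENNReal.toReal_ofReal (by positivity), div_mul_div_comm, one_mul]
  congr 2 <;> push_cast <;> ring

/-! ### Finiteness of Z2E -/

lemma Ae_pair_le {a b s : ℝ} (hsum : a + b = s + s) (hbs : b ≤ s) {M k : ℕ} (hkM : k ≤ M) :
    Ae a M * Ae b k ≤ Ae s M * Ae s k := by
  unfold Ae
  rw [← ENNReal.ofReal_mul (by positivity), ← ENNReal.ofReal_mul (by positivity)]
  apply ENNReal.ofReal_le_ofReal
  rw [div_mul_div_comm, one_mul, div_mul_div_comm, one_mul]
  apply one_div_le_one_div_of_le (by positivity)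
  have hX : (0:ℝ) < (M:ℝ) + 1 := base_pos M
  have hY : (0:ℝ) < (k:ℝ) + 1 := base_pos k
  have hYX : ((k:ℝ) + 1) ≤ (M:ℝ) + 1 := add_le_add_left (Nat.cast_le.mpr hkM) 1
  have e1 : ((M:ℝ) + 1) ^ a = ((M:ℝ) + 1) ^ s * ((M:ℝ) + 1) ^ (s - b) := by
    rw [← Real.rpow_add hX]; congr 1; linarith
  have e2 : ((k:ℝ) + 1) ^ s = ((k:ℝ) + 1) ^ b * ((k:ℝ) + 1) ^ (s - b) := by
    rw [← Real.rpow_add hY]; congr 1; ring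
  have h3 : ((k:ℝ) + 1) ^ (s - b) ≤ ((M:ℝ) + 1) ^ (s - b) :=
    Real.rpow_le_rpow hY.le hYX (by linarith)
  calc ((M:ℝ) + 1) ^ s * ((k:ℝ) + 1) ^ s
      = (((M:ℝ) + 1) ^ s * ((k:ℝ) + 1) ^ b) * ((k:ℝ) + 1) ^ (s - b) := by rw [e2]; ring
    _ ≤ (((M:ℝ) + 1) ^ s * ((k:ℝ) + 1) ^ b) * ((M:ℝ) + 1) ^ (s - b) :=
        mul_le_mul_of_nonneg_left h3 (by positivity)
    _ = ((M:ℝ) + 1) ^ a * ((k:ℝ) + 1) ^ b := by rw [e1]; ring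

lemma Z2E_le_grid {a b s t : ℝ}
    (h : ∀ x : ℕ × ℕ, Ae a (x.2 + x.1 + 1) * Ae b x.2 ≤ Ae s (x.2 + x.1 + 1) * Ae t x.2) :
    Z2E a b ≤ ZR s * ZR t := by
  unfold Z2E
  calc (∑' x : ℕ × ℕ, Ae a (x.2 + x.1 + 1) * Ae b x.2)
      ≤ ∑' x : ℕ × ℕ, Ae s (x.2 + x.1 + 1) * Ae t x.2 := ENNReal.tsum_le_tsum h
    _ ≤ ∑' y : ℕ × ℕ, Ae s y.1 * Ae t y.2 := by
        have hinj : Function.Injective (fun x : ℕ × ℕ => ((x.2 + x.1 + 1, x.2) : ℕ × ℕ)) := by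
          intro y z hyz
          have h1 := congrArg Prod.fst hyz
          have h2 := congrArg Prod.snd hyz
          simp only at h1 h2
          ext <;> omega
        exact ENNReal.tsum_comp_le_tsum_of_injective hinj (fun y => Ae s y.1 * Ae t y.2)
    _ = ZR s * ZR t := grid s t

lemma Z2E_ne_top {a b : ℝ} (ha : 1 < a) (hab : 2 < a + b) : Z2E a b ≠ ⊤ := by
  rcases lt_or_ge 1 b with hb | hb
  · exact ne_top_of_le_ne_top (ENNReal.mul_ne_top (ZR_ne_top ha) (ZR_ne_top hb))
      (Z2E_le_grid fun x => le_rfl)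
  · have h1 : (1:ℝ) < (a + b) / 2 := by linarith
    exact ne_top_of_le_ne_top (ENNReal.mul_ne_top (ZR_ne_top h1) (ZR_ne_top h1))
      (Z2E_le_grid fun x => Ae_pair_le (by ring) (by linarith) (by omega))

/-! ### The key shifted-sum identities -/

lemma key (a b : ℝ) :
    (∑' n : ℕ, ∑' x : ℕ × ℕ, Ae a (x.2 + x.1 + n + 2) * Ae b (x.2 + n + 1)) + Z2E a b
      = Z2E a (b - 1) := by
  have hZ2 : ∀ c : ℝ, Z2E a c = ∑' d : ℕ, ∑' n : ℕ, Ae a (n + d + 1) * Ae c n := by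
    intro c
    exact ENNReal.tsum_prod (f := fun d n => Ae a (n + d + 1) * Ae c n)
  have h1 : (∑' n : ℕ, ∑' x : ℕ × ℕ, Ae a (x.2 + x.1 + n + 2) * Ae b (x.2 + n + 1))
      = ∑' d : ℕ, ∑' m : ℕ, ((m : ℝ≥0∞) + 1) * (Ae a (m + d + 2) * Ae b (m + 1)) := by
    calc (∑' n : ℕ, ∑' x : ℕ × ℕ, Ae a (x.2 + x.1 + n + 2) * Ae b (x.2 + n + 1))
        = ∑' n : ℕ, ∑' d : ℕ, ∑' j : ℕ, Ae a (j + d + n + 2) * Ae b (j + n + 1) :=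
          tsum_congr fun n =>
            ENNReal.tsum_prod (f := fun d j => Ae a (j + d + n + 2) * Ae b (j + n + 1))
      _ = ∑' d : ℕ, ∑' n : ℕ, ∑' j : ℕ, Ae a (j + d + n + 2) * Ae b (j + n + 1) :=
          ENNReal.tsum_comm
      _ = ∑' d : ℕ, ∑' y : ℕ × ℕ, Ae a (y.2 + d + y.1 + 2) * Ae b (y.2 + y.1 + 1) :=
          tsum_congr fun d => ENNReal.tsum_prod.symm
      _ = ∑' d : ℕ, ∑' y : ℕ × ℕ, (fun m => Ae a (m + d + 2) * Ae b (m + 1)) (y.1 + y.2) :=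
          tsum_congr fun d => tsum_congr fun y => AeAe_congr (by omega) (by omega)
      _ = _ := tsum_congr fun d => tsum_antidiag (fun m => Ae a (m + d + 2) * Ae b (m + 1))
  rw [h1, hZ2 b, hZ2 (b - 1), ← Summable.tsum_add ENNReal.summable ENNReal.summable]
  refine tsum_congr fun d => ?_
  have hg : ∀ n : ℕ, Ae a (n + d + 1) * Ae (b - 1) n
      = ((n : ℝ≥0∞) + 1) * (Ae a (n + d + 1) * Ae b n) := by
    intro n
    rw [← Ae_pred b n]
    ring
  rw [tsum_congr hg,
    tsum_eq_zero_add'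
      (f := fun n : ℕ => ((n : ℝ≥0∞) + 1) * (Ae a (n + d + 1) * Ae b n)) ENNReal.summable,
    tsum_eq_zero_add' (f := fun n : ℕ => Ae a (n + d + 1) * Ae b n) ENNReal.summable,
    add_left_comm, ← Summable.tsum_add ENNReal.summable ENNReal.summable]
  congr 1
  · norm_num
  · refine tsum_congr fun m => ?_
    rw [show m + 1 + d + 1 = m + d + 2 from by omega]
    push_cast
    ring

lemma hD (a b : ℝ) :
    (∑' n : ℕ, ∑' k : ℕ, Ae (a + b) (k + n + 1)) + ZR (a + b) = ZR (a + b - 1) := by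
  have h1 : (∑' n : ℕ, ∑' k : ℕ, Ae (a + b) (k + n + 1))
      = ∑' m : ℕ, ((m : ℝ≥0∞) + 1) * Ae (a + b) (m + 1) := by
    calc (∑' n : ℕ, ∑' k : ℕ, Ae (a + b) (k + n + 1))
        = ∑' x : ℕ × ℕ, Ae (a + b) (x.2 + x.1 + 1) := ENNReal.tsum_prod.symm
      _ = ∑' x : ℕ × ℕ, (fun m => Ae (a + b) (m + 1)) (x.1 + x.2) :=
          tsum_congr fun x => congrArg (Ae (a + b)) (by omega)
      _ = _ := tsum_antidiag (fun m => Ae (a + b) (m + 1))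
  rw [h1]
  have h2 : ZR (a + b - 1) = ∑' m : ℕ, ((m : ℝ≥0∞) + 1) * Ae (a + b) m :=
    (tsum_congr fun m => Ae_pred (a + b) m).symm
  rw [h2, show ZR (a + b) = ∑' m : ℕ, Ae (a + b) m from rfl,
    tsum_eq_zero_add' (f := fun m : ℕ => ((m : ℝ≥0∞) + 1) * Ae (a + b) m) ENNReal.summable,
    tsum_eq_zero_add' (f := fun m : ℕ => Ae (a + b) m) ENNReal.summable,
    add_left_comm, ← Summable.tsum_add ENNReal.summable ENNReal.summable]
  congr 1
  · norm_num
  · refine tsum_congr fun m => ?_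
    push_cast
    ring

lemma stuffle (a b : ℝ) : ZR a * ZR b = ZR (a + b) + Z2E a b + Z2E b a := by
  have e1 : (∑' k : ℕ, Ae a k * Ae b k) = ZR (a + b) := tsum_congr fun k => Ae_mul a b k
  have e2 : (∑' x : ℕ × ℕ, Ae a (x.2 + x.1 + 1) * Ae b x.2) = Z2E a b := rfl
  have e3 : (∑' x : ℕ × ℕ, Ae a x.2 * Ae b (x.2 + x.1 + 1)) = Z2E b a :=
    tsum_congr fun x => mul_comm _ _
  calc ZR a * ZR b = ∑' x : ℕ × ℕ, Ae a x.1 * Ae b x.2 := (grid a b).symm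
    _ = (∑' k : ℕ, Ae a k * Ae b k) + (∑' x : ℕ × ℕ, Ae a (x.2 + x.1 + 1) * Ae b x.2)
          + (∑' x : ℕ × ℕ, Ae a x.2 * Ae b (x.2 + x.1 + 1)) :=
        tsum_trichotomy (fun i j => Ae a i * Ae b j)
    _ = ZR (a + b) + Z2E a b + Z2E b a := by rw [e1, e2, e3]

lemma main_eq (a b : ℝ) :
    (∑' n : ℕ, Te a (n + 1) * Te b (n + 1)) + (Z2E a b + Z2E b a + ZR (a + b))
      = Z2E a (b - 1) + Z2E b (a - 1) + ZR (a + b - 1) := by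
  have hterm : ∀ n : ℕ, Te a (n + 1) * Te b (n + 1) =
      (∑' k : ℕ, Ae (a + b) (k + n + 1))
        + (∑' x : ℕ × ℕ, Ae a (x.2 + x.1 + n + 2) * Ae b (x.2 + n + 1))
        + (∑' x : ℕ × ℕ, Ae a (x.2 + n + 1) * Ae b (x.2 + x.1 + n + 2)) := by
    intro n
    calc Te a (n + 1) * Te b (n + 1)
        = ∑' x : ℕ × ℕ, Ae a (x.1 + (n + 1)) * Ae b (x.2 + (n + 1)) := Te_mul a b (n + 1)
      _ = (∑' k : ℕ, Ae a (k + (n + 1)) * Ae b (k + (n + 1)))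
            + (∑' x : ℕ × ℕ, Ae a ((x.2 + x.1 + 1) + (n + 1)) * Ae b (x.2 + (n + 1)))
            + (∑' x : ℕ × ℕ, Ae a (x.2 + (n + 1)) * Ae b ((x.2 + x.1 + 1) + (n + 1))) :=
          tsum_trichotomy (fun i j => Ae a (i + (n + 1)) * Ae b (j + (n + 1)))
      _ = _ := by
          congr 1
          · congr 1
            · refine tsum_congr fun k => ?_
              rw [Ae_mul]
              exact congrArg (Ae (a + b)) (by omega)
            · exact tsum_congr fun x => AeAe_congr (by omega) (by omega)
          · exact tsum_congr fun x => AeAe_congr (by omega) (by omega)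
  rw [tsum_congr hterm,
    Summable.tsum_add ENNReal.summable ENNReal.summable,
    Summable.tsum_add ENNReal.summable ENNReal.summable]
  have hG := key a b
  have hL : (∑' n : ℕ, ∑' x : ℕ × ℕ, Ae a (x.2 + n + 1) * Ae b (x.2 + x.1 + n + 2)) + Z2E b a
      = Z2E b (a - 1) := by
    rw [← key b a]
    congr 1
    exact tsum_congr fun n => tsum_congr fun x => mul_comm _ _
  have hDD := hD a b
  rw [← hG, ← hL, ← hDD]
  ring

end ZetaAux

open ZetaAux

theorem stmt0 (p q : ℝ) (hp : 1 < p) (hq : 1 < q) (hpq : 3 < p + q) :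
    ∑' n : ℕ, zetaTail p (n + 1) * zetaTail q (n + 1) =
      zeta2 p (q - 1) + zeta2 q (p - 1) + rzeta (p + q - 1) - rzeta p * rzeta q := by
  have key1 := main_eq p q
  have key2 := stuffle p q
  have fG : Z2E p (q - 1) ≠ ⊤ := Z2E_ne_top hp (by linarith)
  have fL : Z2E q (p - 1) ≠ ⊤ := Z2E_ne_top hq (by linarith)
  have fD : ZR (p + q - 1) ≠ ⊤ := ZR_ne_top (by linarith)
  have fZab : Z2E p q ≠ ⊤ := Z2E_ne_top hp (by linarith)
  have fZba : Z2E q p ≠ ⊤ := Z2E_ne_top hq (by linarith)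
  have fR : ZR (p + q) ≠ ⊤ := ZR_ne_top (by linarith)
  have fRHS : Z2E p (q - 1) + Z2E q (p - 1) + ZR (p + q - 1) ≠ ⊤ :=
    ENNReal.add_ne_top.mpr ⟨ENNReal.add_ne_top.mpr ⟨fG, fL⟩, fD⟩
  have fS : (∑' n : ℕ, Te p (n + 1) * Te q (n + 1)) ≠ ⊤ := by
    intro hcon
    apply fRHS
    rw [← key1, hcon, top_add]
  have r1 := congrArg ENNReal.toReal key1
  rw [ENNReal.toReal_add fS (ENNReal.add_ne_top.mpr ⟨ENNReal.add_ne_top.mpr ⟨fZab, fZba⟩, fR⟩),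
    ENNReal.toReal_add (ENNReal.add_ne_top.mpr ⟨fZab, fZba⟩) fR,
    ENNReal.toReal_add fZab fZba,
    ENNReal.toReal_add (ENNReal.add_ne_top.mpr ⟨fG, fL⟩) fD,
    ENNReal.toReal_add fG fL] at r1
  have r2 := congrArg ENNReal.toReal key2
  rw [ENNReal.toReal_mul,
    ENNReal.toReal_add (ENNReal.add_ne_top.mpr ⟨fR, fZab⟩) fZba,
    ENNReal.toReal_add fR fZab] at r2
  have cS : (∑' n : ℕ, Te p (n + 1) * Te q (n + 1)).toReal
      = ∑' n : ℕ, zetaTail p (n + 1) * zetaTail q (n + 1) := by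
    rw [ENNReal.tsum_toReal_eq (f := fun n : ℕ => Te p (n + 1) * Te q (n + 1))
      (fun n => ENNReal.mul_ne_top (Te_ne_top hp _) (Te_ne_top hq _))]
    refine tsum_congr fun n => ?_
    rw [ENNReal.toReal_mul, Te_eq hp, Te_eq hq,
      ENNReal.toReal_ofReal (zetaTail_nonneg hp _), ENNReal.toReal_ofReal (zetaTail_nonneg hq _)]
  rw [cS, ← zeta2_eq_toReal p q, ← zeta2_eq_toReal q p, ← zeta2_eq_toReal p (q - 1),
    ← zeta2_eq_toReal q (p - 1), ZR_toReal (show (1:ℝ) < p + q by linarith),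
    ZR_toReal (show (1:ℝ) < p + q - 1 by linarith)] at r1
  rw [ZR_toReal hp, ZR_toReal hq, ZR_toReal (show (1:ℝ) < p + q by linarith),
    ← zeta2_eq_toReal p q, ← zeta2_eq_toReal q p] at r2
  linarith [r1, r2]
end

section
/- The sum over n ≥ 1 of (ζ(3) − Σ_{j=1}^n 1/j^3)(ζ(2) − Σ_{k=1}^n 1/k^2) equals 2ζ(4) − ζ(2)ζ(3). -/
open scoped BigOperators ENNReal

namespace S3A

noncomputable def j (p m : ℕ) : ℝ≥0∞ := ENNReal.ofReal (1 / (m : ℝ) ^ p)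

lemma j_ne_top (p m : ℕ) : j p m ≠ ⊤ := ENNReal.ofReal_ne_top

lemma j_mul_j (p q m : ℕ) : j p m * j q m = j (p + q) m := by
  rw [j, j, j, ← ENNReal.ofReal_mul (by positivity)]
  congr 1
  rw [pow_add, one_div_mul_one_div]

lemma succ_mul_j (p s : ℕ) : ((s : ℝ≥0∞) + 1) * j (p + 1) (s + 1) = j p (s + 1) := by
  have h1 : ((s : ℝ≥0∞) + 1) = ENNReal.ofReal ((s : ℝ) + 1) := by
    rw [ENNReal.ofReal_add (by positivity) zero_le_one, ENNReal.ofReal_natCast,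
      ENNReal.ofReal_one]
  rw [j, j, h1, ← ENNReal.ofReal_mul (by positivity)]
  congr 1
  have hx : ((s : ℝ) + 1) ≠ 0 := by positivity
  push_cast
  field_simp
  ring

lemma tsum_mul_tsum (x y : ℕ → ℝ≥0∞) :
    (∑' a, x a) * (∑' b, y b) = ∑' p : ℕ × ℕ, x p.1 * y p.2 := by
  rw [ENNReal.tsum_prod']
  simp_rw [ENNReal.tsum_mul_left]
  rw [ENNReal.tsum_mul_right]

def antidiagEquiv : (Σ s : ℕ, Fin (s + 1)) ≃ ℕ × ℕ where
  toFun x := (x.2, x.1 - x.2)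
  invFun p := ⟨p.1 + p.2, ⟨p.1, by omega⟩⟩
  left_inv := by
    rintro ⟨s, ⟨i, hi⟩⟩
    obtain ⟨t, rfl⟩ : ∃ t, s = i + t := ⟨s - i, by omega⟩
    dsimp only
    have h2 : i + (i + t - i) = i + t := by omega
    refine Sigma.ext h2 ?_
    rw [Fin.heq_ext_iff (by dsimp only; omega)]
  right_inv := by
    rintro ⟨a, b⟩
    simp

lemma collapse (F : ℕ → ℝ≥0∞) :
    ∑' p : ℕ × ℕ, F (p.1 + p.2) = ∑' s : ℕ, ((s : ℝ≥0∞) + 1) * F s := by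
  rw [← antidiagEquiv.tsum_eq (fun p : ℕ × ℕ => F (p.1 + p.2))]
  rw [ENNReal.tsum_sigma']
  apply tsum_congr
  intro s
  have h : ∀ i : Fin (s + 1),
      F ((antidiagEquiv ⟨s, i⟩).1 + (antidiagEquiv ⟨s, i⟩).2) = F s := by
    rintro ⟨i, hi⟩
    simp only [antidiagEquiv, Equiv.coe_fn_mk]
    congr 1
    omega
  rw [tsum_congr h, tsum_fintype]
  rw [Finset.sum_const, Finset.card_univ, Fintype.card_fin, nsmul_eq_mul]
  push_cast
  ring

lemma tri (g : ℕ → ℕ → ℝ≥0∞) :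
    ∑' p : ℕ × ℕ, g p.1 p.2 =
      (∑' q : ℕ × ℕ, g q.1 (q.1 + q.2 + 1)) + (∑' n, g n n) +
        ∑' q : ℕ × ℕ, g (q.2 + q.1 + 1) q.2 := by
  classical
  have hdecomp : ∀ p : ℕ × ℕ, g p.1 p.2 =
      (if p.1 < p.2 then g p.1 p.2 else 0) + (if p.1 = p.2 then g p.1 p.2 else 0) +
        (if p.2 < p.1 then g p.1 p.2 else 0) := by
    intro p
    rcases lt_trichotomy p.1 p.2 with h | h | h
    · rw [if_pos h, if_neg (by omega), if_neg (by omega)]; simp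
    · rw [if_neg (by omega), if_pos h, if_neg (by omega)]; simp
    · rw [if_neg (by omega), if_neg (by omega), if_pos h]; simp
  rw [tsum_congr hdecomp]
  rw [ENNReal.tsum_add, ENNReal.tsum_add]
  congr 1
  · congr 1
    · have hinj : Function.Injective (fun q : ℕ × ℕ => ((q.1, q.1 + q.2 + 1) : ℕ × ℕ)) := by
        intro a b h
        simp only [Prod.mk.injEq] at h
        obtain ⟨h1, h2⟩ := h
        ext <;> omega
      rw [← hinj.tsum_eq]
      · exact tsum_congr fun q => by simp only; rw [if_pos (by omega)]
      · intro p hp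
        simp only [Function.mem_support] at hp
        by_cases hlt : p.1 < p.2
        · exact ⟨(p.1, p.2 - p.1 - 1), Prod.ext_iff.2 ⟨rfl, by simp; omega⟩⟩
        · exact (hp (if_neg hlt)).elim
    · have hinj : Function.Injective (fun n : ℕ => ((n, n) : ℕ × ℕ)) := by
        intro a b h
        exact (Prod.ext_iff.1 h).1
      rw [← hinj.tsum_eq]
      · exact tsum_congr fun n => by simp
      · intro p hp
        simp only [Function.mem_support] at hp
        by_cases heq : p.1 = p.2
        · exact ⟨p.1, Prod.ext_iff.2 ⟨rfl, heq⟩⟩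
        · exact (hp (if_neg heq)).elim
  · have hinj : Function.Injective (fun q : ℕ × ℕ => ((q.2 + q.1 + 1, q.2) : ℕ × ℕ)) := by
      intro a b h
      simp only [Prod.mk.injEq] at h
      obtain ⟨h1, h2⟩ := h
      ext <;> omega
    rw [← hinj.tsum_eq]
    · exact tsum_congr fun q => by simp only; rw [if_pos (by omega)]
    · intro p hp
      simp only [Function.mem_support] at hp
      by_cases hlt : p.2 < p.1
      · exact ⟨(p.1 - p.2 - 1, p.2), Prod.ext_iff.2 ⟨by simp; omega, rfl⟩⟩
      · exact (hp (if_neg hlt)).elim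

/-! ## main ENNReal quantities -/

noncomputable def ZE (p : ℕ) : ℝ≥0∞ := ∑' n : ℕ, j p (n + 1)

noncomputable def tailE (p n : ℕ) : ℝ≥0∞ := ∑' a : ℕ, j p (n + a + 2)

noncomputable def TE : ℝ≥0∞ := ∑' n : ℕ, tailE 3 n * tailE 2 n

noncomputable def D2E : ℝ≥0∞ := ∑' q : ℕ × ℕ, j 2 (q.1 + q.2 + 2) * j 2 (q.2 + 1)

noncomputable def D31E : ℝ≥0∞ := ∑' q : ℕ × ℕ, j 3 (q.1 + q.2 + 2) * j 1 (q.2 + 1)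

lemma tsum_swap (f : ℕ × ℕ → ℝ≥0∞) : ∑' q : ℕ × ℕ, f (q.2, q.1) = ∑' q, f q :=
  (Equiv.prodComm ℕ ℕ).tsum_eq f

lemma E2 : ZE 2 * ZE 2 = 2 * D2E + ZE 4 := by
  conv_lhs => rw [ZE, tsum_mul_tsum]
  rw [tri (fun a b => j 2 (a + 1) * j 2 (b + 1))]
  have h1 : (∑' q : ℕ × ℕ, j 2 (q.1 + 1) * j 2 (q.1 + q.2 + 1 + 1)) = D2E := by
    rw [D2E, ← tsum_swap (fun q : ℕ × ℕ => j 2 (q.1 + q.2 + 2) * j 2 (q.2 + 1))]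
    apply tsum_congr
    intro q
    rw [mul_comm, show q.1 + q.2 + 1 + 1 = q.2 + q.1 + 2 from by omega]
  have h2 : (∑' n : ℕ, j 2 (n + 1) * j 2 (n + 1)) = ZE 4 := by
    rw [ZE]; exact tsum_congr fun n => j_mul_j 2 2 (n + 1)
  have h3 : (∑' q : ℕ × ℕ, j 2 (q.2 + q.1 + 1 + 1) * j 2 (q.2 + 1)) = D2E := by
    rw [D2E]
    exact tsum_congr fun q => by rw [show q.2 + q.1 + 1 + 1 = q.1 + q.2 + 2 from by omega]
  rw [h1, h2, h3]
  ring

lemma hpt_real (M N : ℝ) (hM : 0 < M) (hN : 0 < N) :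
    ENNReal.ofReal (1 / M ^ 2) * ENNReal.ofReal (1 / N ^ 2) =
      (ENNReal.ofReal (1 / (M + N) ^ 2) * ENNReal.ofReal (1 / M ^ 2) +
        ENNReal.ofReal (1 / (M + N) ^ 2) * ENNReal.ofReal (1 / N ^ 2)) +
      2 * (ENNReal.ofReal (1 / (M + N) ^ 3) * ENNReal.ofReal (1 / M) +
        ENNReal.ofReal (1 / (M + N) ^ 3) * ENNReal.ofReal (1 / N)) := by
  have hS : (0:ℝ) < M + N := by linarith
  have h2 : (2 : ℝ≥0∞) = ENNReal.ofReal 2 := by simp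
  rw [h2, ← ENNReal.ofReal_mul (by positivity), ← ENNReal.ofReal_mul (by positivity),
    ← ENNReal.ofReal_mul (by positivity), ← ENNReal.ofReal_mul (by positivity),
    ← ENNReal.ofReal_mul (by positivity),
    ← ENNReal.ofReal_add (by positivity) (by positivity),
    ← ENNReal.ofReal_add (by positivity) (by positivity),
    ← ENNReal.ofReal_mul (by positivity),
    ← ENNReal.ofReal_add (by positivity) (by positivity)]
  congr 1
  field_simp
  ring

lemma j_cast (p m : ℕ) (x : ℝ) (h : (m : ℝ) = x) : j p m = ENNReal.ofReal (1 / x ^ p) := by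
  rw [j, h]

lemma E3 : ZE 2 * ZE 2 = 2 * D2E + 4 * D31E := by
  rw [ZE, tsum_mul_tsum]
  have hpt : ∀ p : ℕ × ℕ, j 2 (p.1 + 1) * j 2 (p.2 + 1) =
      (j 2 (p.1 + p.2 + 2) * j 2 (p.1 + 1) + j 2 (p.1 + p.2 + 2) * j 2 (p.2 + 1)) +
        2 * (j 3 (p.1 + p.2 + 2) * j 1 (p.1 + 1) + j 3 (p.1 + p.2 + 2) * j 1 (p.2 + 1)) := by
    intro p
    have c1 : ((p.1 + 1 : ℕ) : ℝ) = (p.1 : ℝ) + 1 := by push_cast; ring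
    have c2 : ((p.2 + 1 : ℕ) : ℝ) = (p.2 : ℝ) + 1 := by push_cast; ring
    have c3 : ((p.1 + p.2 + 2 : ℕ) : ℝ) = ((p.1 : ℝ) + 1) + ((p.2 : ℝ) + 1) := by
      push_cast; ring
    rw [j_cast 2 _ _ c1, j_cast 2 _ _ c2, j_cast 2 _ _ c3, j_cast 3 _ _ c3,
      j_cast 1 _ _ c1, j_cast 1 _ _ c2]
    simpa [pow_one] using hpt_real ((p.1 : ℝ) + 1) ((p.2 : ℝ) + 1) (by positivity) (by positivity)
  rw [tsum_congr hpt, ENNReal.tsum_add, ENNReal.tsum_add, ENNReal.tsum_mul_left,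
    ENNReal.tsum_add]
  have h1 : (∑' p : ℕ × ℕ, j 2 (p.1 + p.2 + 2) * j 2 (p.1 + 1)) = D2E := by
    rw [D2E, ← tsum_swap (fun q : ℕ × ℕ => j 2 (q.1 + q.2 + 2) * j 2 (q.2 + 1))]
    exact tsum_congr fun q => by rw [show q.2 + q.1 + 2 = q.1 + q.2 + 2 from by omega]
  have h2 : (∑' p : ℕ × ℕ, j 2 (p.1 + p.2 + 2) * j 2 (p.2 + 1)) = D2E := rfl
  have h3 : (∑' p : ℕ × ℕ, j 3 (p.1 + p.2 + 2) * j 1 (p.1 + 1)) = D31E := by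
    rw [D31E, ← tsum_swap (fun q : ℕ × ℕ => j 3 (q.1 + q.2 + 2) * j 1 (q.2 + 1))]
    exact tsum_congr fun q => by rw [show q.2 + q.1 + 2 = q.1 + q.2 + 2 from by omega]
  have h4 : (∑' p : ℕ × ℕ, j 3 (p.1 + p.2 + 2) * j 1 (p.2 + 1)) = D31E := rfl
  rw [h1, h2, h3, h4]
  ring

lemma E1 : TE + ZE 2 * ZE 3 = D2E + D31E + ZE 4 := by
  have hU : (∑' p : ℕ × ℕ, ∑' n : ℕ, j 3 (n + p.1 + 1) * j 2 (n + p.2 + 1))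
      = TE + ZE 2 * ZE 3 := by
    rw [ENNReal.tsum_comm]
    calc ∑' n : ℕ, ∑' p : ℕ × ℕ, j 3 (n + p.1 + 1) * j 2 (n + p.2 + 1)
        = ∑' n : ℕ, (∑' a : ℕ, j 3 (n + a + 1)) * (∑' b : ℕ, j 2 (n + b + 1)) :=
          tsum_congr fun n => (tsum_mul_tsum (fun a => j 3 (n + a + 1)) (fun b => j 2 (n + b + 1))).symm
      _ = ((∑' a : ℕ, j 3 (0 + a + 1)) * (∑' b : ℕ, j 2 (0 + b + 1)))
            + ∑' n : ℕ, (∑' a : ℕ, j 3 (n + 1 + a + 1)) * (∑' b : ℕ, j 2 (n + 1 + b + 1)) :=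
          tsum_eq_zero_add' ENNReal.summable
      _ = TE + ZE 2 * ZE 3 := by
          rw [add_comm]
          congr 1
          · rw [TE]
            apply tsum_congr; intro n
            rw [tailE, tailE]
            congr 1
            · exact tsum_congr fun a => by rw [show n + 1 + a + 1 = n + a + 2 from by omega]
            · exact tsum_congr fun b => by rw [show n + 1 + b + 1 = n + b + 2 from by omega]
          · rw [mul_comm]
            congr 1
            · rw [ZE]; exact tsum_congr fun b => by rw [Nat.zero_add]
            · rw [ZE]; exact tsum_congr fun a => by rw [Nat.zero_add]
  rw [← hU]
  rw [tri (fun a b => ∑' n : ℕ, j 3 (n + a + 1) * j 2 (n + b + 1))]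
  have hA : (∑' q : ℕ × ℕ, ∑' n : ℕ, j 3 (n + q.1 + 1) * j 2 (n + (q.1 + q.2 + 1) + 1))
      = D2E := by
    rw [ENNReal.tsum_prod', ENNReal.tsum_comm]
    have inner : ∀ b : ℕ, (∑' a : ℕ, ∑' n : ℕ, j 3 (n + a + 1) * j 2 (n + (a + b + 1) + 1))
        = ∑' s : ℕ, j 2 (s + 1) * j 2 (s + b + 2) := by
      intro b
      rw [← ENNReal.tsum_prod'
        (f := fun p : ℕ × ℕ => j 3 (p.2 + p.1 + 1) * j 2 (p.2 + (p.1 + b + 1) + 1))]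
      have hc : ∀ p : ℕ × ℕ, j 3 (p.2 + p.1 + 1) * j 2 (p.2 + (p.1 + b + 1) + 1)
          = (fun s => j 3 (s + 1) * j 2 (s + b + 2)) (p.1 + p.2) := by
        intro p
        simp only
        rw [show p.2 + p.1 + 1 = p.1 + p.2 + 1 from by omega,
          show p.2 + (p.1 + b + 1) + 1 = p.1 + p.2 + b + 2 from by omega]
      refine ((tsum_congr hc).trans
        (collapse (fun s => j 3 (s + 1) * j 2 (s + b + 2)))).trans ?_
      exact tsum_congr fun s => by rw [← mul_assoc, succ_mul_j 2 s]
    rw [tsum_congr inner, ← ENNReal.tsum_prod'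
      (f := fun q : ℕ × ℕ => j 2 (q.2 + 1) * j 2 (q.2 + q.1 + 2)), D2E]
    apply tsum_congr; intro q
    rw [mul_comm, show q.2 + q.1 + 2 = q.1 + q.2 + 2 from by omega]
  have hD : (∑' k : ℕ, ∑' n : ℕ, j 3 (n + k + 1) * j 2 (n + k + 1)) = ZE 4 := by
    rw [← ENNReal.tsum_prod'
      (f := fun p : ℕ × ℕ => j 3 (p.2 + p.1 + 1) * j 2 (p.2 + p.1 + 1))]
    have hc : ∀ p : ℕ × ℕ, j 3 (p.2 + p.1 + 1) * j 2 (p.2 + p.1 + 1)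
        = (fun s => j 5 (s + 1)) (p.1 + p.2) := by
      intro p
      simp only
      rw [j_mul_j, show p.2 + p.1 + 1 = p.1 + p.2 + 1 from by omega]
    refine ((tsum_congr hc).trans (collapse (fun s => j 5 (s + 1)))).trans ?_
    rw [ZE]
    exact tsum_congr fun s => succ_mul_j 4 s
  have hC : (∑' q : ℕ × ℕ, ∑' n : ℕ, j 3 (n + (q.2 + q.1 + 1) + 1) * j 2 (n + q.2 + 1))
      = D31E := by
    rw [ENNReal.tsum_prod']
    have inner : ∀ d : ℕ, (∑' k : ℕ, ∑' n : ℕ, j 3 (n + (k + d + 1) + 1) * j 2 (n + k + 1))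
        = ∑' s : ℕ, j 3 (s + d + 2) * j 1 (s + 1) := by
      intro d
      rw [← ENNReal.tsum_prod'
        (f := fun p : ℕ × ℕ => j 3 (p.2 + (p.1 + d + 1) + 1) * j 2 (p.2 + p.1 + 1))]
      have hc : ∀ p : ℕ × ℕ, j 3 (p.2 + (p.1 + d + 1) + 1) * j 2 (p.2 + p.1 + 1)
          = (fun s => j 3 (s + d + 2) * j 2 (s + 1)) (p.1 + p.2) := by
        intro p
        simp only
        rw [show p.2 + (p.1 + d + 1) + 1 = p.1 + p.2 + d + 2 from by omega,
          show p.2 + p.1 + 1 = p.1 + p.2 + 1 from by omega]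
      refine ((tsum_congr hc).trans
        (collapse (fun s => j 3 (s + d + 2) * j 2 (s + 1)))).trans ?_
      exact tsum_congr fun s => by rw [mul_left_comm, succ_mul_j 1 s]
    rw [tsum_congr inner, ← ENNReal.tsum_prod'
      (f := fun q : ℕ × ℕ => j 3 (q.2 + q.1 + 2) * j 1 (q.2 + 1)), D31E]
    apply tsum_congr; intro q
    rw [show q.2 + q.1 + 2 = q.1 + q.2 + 2 from by omega]
  rw [hA, hD, hC]
  ring

/-! ## Real side -/

lemma real_summable (p : ℕ) (hp : 1 < p) :
    Summable (fun n : ℕ => 1 / ((n : ℝ) + 1) ^ p) := by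
  have h := (Real.summable_one_div_nat_pow (p := p)).2 hp
  have h2 := (summable_nat_add_iff (f := fun n : ℕ => 1 / (n : ℝ) ^ p) 1).2 h
  exact h2.congr fun n => by push_cast; ring

noncomputable def zr (p : ℕ) : ℝ := ∑' n : ℕ, 1 / ((n : ℝ) + 1) ^ p

lemma zr_nonneg (p : ℕ) : 0 ≤ zr p := tsum_nonneg fun n => by positivity

lemma ofReal_zr (p : ℕ) (hp : 1 < p) : ENNReal.ofReal (zr p) = ZE p := by
  rw [zr, ENNReal.ofReal_tsum_of_nonneg (fun n => by positivity) (real_summable p hp), ZE]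
  exact tsum_congr fun n => (j_cast p (n + 1) ((n : ℝ) + 1) (by push_cast; ring)).symm

lemma ZE_ne_top (p : ℕ) (hp : 1 < p) : ZE p ≠ ⊤ := by
  rw [← ofReal_zr p hp]; exact ENNReal.ofReal_ne_top

lemma zr_toReal (p : ℕ) (hp : 1 < p) : zr p = (ZE p).toReal := by
  rw [← ofReal_zr p hp, ENNReal.toReal_ofReal (zr_nonneg p)]

lemma rzeta_natCast (p : ℕ) : rzeta (p : ℝ) = zr p := by
  rw [rzeta, zr]
  exact tsum_congr fun n => by rw [Real.rpow_natCast]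

lemma tail_repr (p : ℕ) (hp : 1 < p) (m : ℕ) :
    zetaTail (p : ℝ) m = ∑' a : ℕ, 1 / (((a + m : ℕ) : ℝ) + 1) ^ p := by
  have hs := real_summable p hp
  have h := Summable.sum_add_tsum_nat_add (f := fun n : ℕ => 1 / ((n : ℝ) + 1) ^ p) m hs
  have e1 : (∑' n : ℕ, 1 / ((n : ℝ) + 1) ^ ((p : ℕ) : ℝ)) = ∑' n : ℕ, 1 / ((n : ℝ) + 1) ^ p :=
    tsum_congr fun n => by rw [Real.rpow_natCast]
  have e2 : (∑ i ∈ Finset.range m, 1 / ((i : ℝ) + 1) ^ ((p : ℕ) : ℝ))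
      = ∑ i ∈ Finset.range m, 1 / ((i : ℝ) + 1) ^ p :=
    Finset.sum_congr rfl fun i _ => by rw [Real.rpow_natCast]
  rw [zetaTail, rzeta, e1, e2, ← h, add_sub_cancel_left]

lemma tail_nonneg (p : ℕ) (hp : 1 < p) (m : ℕ) : 0 ≤ zetaTail (p : ℝ) m := by
  rw [tail_repr p hp m]
  exact tsum_nonneg fun n => by positivity

lemma ofReal_tail (p : ℕ) (hp : 1 < p) (n : ℕ) :
    ENNReal.ofReal (zetaTail (p : ℝ) (n + 1)) = tailE p n := by
  rw [tail_repr p hp (n + 1),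
    ENNReal.ofReal_tsum_of_nonneg (fun a => by positivity)
      ((summable_nat_add_iff (n + 1)).2 (real_summable p hp)), tailE]
  exact tsum_congr fun a => (j_cast p (n + a + 2) _ (by push_cast; ring)).symm

lemma tailE_ne_top (p : ℕ) (hp : 1 < p) (n : ℕ) : tailE p n ≠ ⊤ := by
  rw [← ofReal_tail p hp n]; exact ENNReal.ofReal_ne_top

lemma tail_toReal (p : ℕ) (hp : 1 < p) (n : ℕ) :
    zetaTail (p : ℝ) (n + 1) = (tailE p n).toReal := by
  rw [← ofReal_tail p hp n, ENNReal.toReal_ofReal (tail_nonneg p hp (n + 1))]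

lemma D2E_ne_top : D2E ≠ ⊤ := by
  intro h
  have h2 : ZE 2 * ZE 2 = ⊤ := by
    rw [E2, h, ENNReal.mul_top (by norm_num)]; simp
  exact ENNReal.mul_ne_top (ZE_ne_top 2 (by norm_num)) (ZE_ne_top 2 (by norm_num)) h2

lemma D31E_ne_top : D31E ≠ ⊤ := by
  intro h
  have h2 : ZE 2 * ZE 2 = ⊤ := by
    rw [E3, h, ENNReal.mul_top (by norm_num)]; simp
  exact ENNReal.mul_ne_top (ZE_ne_top 2 (by norm_num)) (ZE_ne_top 2 (by norm_num)) h2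

lemma rhsE_ne_top : D2E + D31E + ZE 4 ≠ ⊤ :=
  ENNReal.add_ne_top.2 ⟨ENNReal.add_ne_top.2 ⟨D2E_ne_top, D31E_ne_top⟩, ZE_ne_top 4 (by norm_num)⟩

lemma TE_ne_top : TE ≠ ⊤ := by
  have hle : TE ≤ D2E + D31E + ZE 4 := E1 ▸ le_self_add
  exact (lt_of_le_of_lt hle (lt_top_iff_ne_top.2 rhsE_ne_top)).ne

lemma zr_val (k : ℕ) (hk : k ≠ 0) (v : ℝ)
    (h : HasSum (fun n : ℕ => (1 : ℝ) / (n : ℝ) ^ k) v) : zr k = v := by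
  have ht := h.tsum_eq
  rw [Summable.tsum_eq_zero_add h.summable] at ht
  simp only [Nat.cast_zero, zero_pow hk, div_zero, zero_add, Nat.cast_add, Nat.cast_one] at ht
  rw [zr]
  exact ht

lemma zr_two : zr 2 = Real.pi ^ 2 / 6 := zr_val 2 two_ne_zero _ hasSum_zeta_two

lemma zr_four : zr 4 = Real.pi ^ 4 / 90 := zr_val 4 (by norm_num) _ hasSum_zeta_four

end S3A

theorem stmt3 :
    ∑' n : ℕ, zetaTail 3 (n + 1) * zetaTail 2 (n + 1) =
      2 * rzeta 4 - rzeta 2 * rzeta 3 := by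
  have hz2 : rzeta 2 = (S3A.ZE 2).toReal := by
    rw [show (2 : ℝ) = ((2 : ℕ) : ℝ) from by norm_num, S3A.rzeta_natCast,
      S3A.zr_toReal 2 (by norm_num)]
  have hz3 : rzeta 3 = (S3A.ZE 3).toReal := by
    rw [show (3 : ℝ) = ((3 : ℕ) : ℝ) from by norm_num, S3A.rzeta_natCast,
      S3A.zr_toReal 3 (by norm_num)]
  have hz4 : rzeta 4 = (S3A.ZE 4).toReal := by
    rw [show (4 : ℝ) = ((4 : ℕ) : ℝ) from by norm_num, S3A.rzeta_natCast,
      S3A.zr_toReal 4 (by norm_num)]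
  have ht3 : ∀ n : ℕ, zetaTail 3 (n + 1) = (S3A.tailE 3 n).toReal := fun n => by
    rw [show (3 : ℝ) = ((3 : ℕ) : ℝ) from by norm_num]
    exact S3A.tail_toReal 3 (by norm_num) n
  have ht2 : ∀ n : ℕ, zetaTail 2 (n + 1) = (S3A.tailE 2 n).toReal := fun n => by
    rw [show (2 : ℝ) = ((2 : ℕ) : ℝ) from by norm_num]
    exact S3A.tail_toReal 2 (by norm_num) n
  have hL : (∑' n : ℕ, zetaTail 3 (n + 1) * zetaTail 2 (n + 1)) = S3A.TE.toReal := by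
    rw [S3A.TE, ENNReal.tsum_toReal_eq
      (fun n => ENNReal.mul_ne_top (S3A.tailE_ne_top 3 (by norm_num) n)
        (S3A.tailE_ne_top 2 (by norm_num) n))]
    exact tsum_congr fun n => by rw [ht3 n, ht2 n, ENNReal.toReal_mul]
  have re1 := congrArg ENNReal.toReal S3A.E1
  rw [ENNReal.toReal_add S3A.TE_ne_top
      (ENNReal.mul_ne_top (S3A.ZE_ne_top 2 (by norm_num)) (S3A.ZE_ne_top 3 (by norm_num))),
    ENNReal.toReal_mul,
    ENNReal.toReal_add (ENNReal.add_ne_top.2 ⟨S3A.D2E_ne_top, S3A.D31E_ne_top⟩)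
      (S3A.ZE_ne_top 4 (by norm_num)),
    ENNReal.toReal_add S3A.D2E_ne_top S3A.D31E_ne_top] at re1
  have re2 := congrArg ENNReal.toReal S3A.E2
  rw [ENNReal.toReal_mul,
    ENNReal.toReal_add (ENNReal.mul_ne_top ENNReal.ofNat_ne_top S3A.D2E_ne_top)
      (S3A.ZE_ne_top 4 (by norm_num)),
    ENNReal.toReal_mul, ENNReal.toReal_ofNat] at re2
  have re3 := congrArg ENNReal.toReal S3A.E3
  rw [ENNReal.toReal_mul,
    ENNReal.toReal_add (ENNReal.mul_ne_top ENNReal.ofNat_ne_top S3A.D2E_ne_top)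
      (ENNReal.mul_ne_top ENNReal.ofNat_ne_top S3A.D31E_ne_top),
    ENNReal.toReal_mul, ENNReal.toReal_mul, ENNReal.toReal_ofNat, ENNReal.toReal_ofNat] at re3
  have hb2 : (S3A.ZE 2).toReal = Real.pi ^ 2 / 6 := by
    rw [← S3A.zr_toReal 2 (by norm_num), S3A.zr_two]
  have hb4 : (S3A.ZE 4).toReal = Real.pi ^ 4 / 90 := by
    rw [← S3A.zr_toReal 4 (by norm_num), S3A.zr_four]
  have hsq : (S3A.ZE 2).toReal * (S3A.ZE 2).toReal = Real.pi ^ 4 / 36 := by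
    rw [hb2]; ring
  rw [hL, hz2, hz3, hz4]
  linarith [re1, re2, re3, hsq, hb4]
end

section
/- For an integer n ≥ 2, ζ(n,1) = (n/2)ζ(n+1) − (1/2)Σ_{j=2}^{n−1} ζ(j)ζ(n+1−j), where the sum is empty (equal to 0) if n = 2. -/
open scoped BigOperators

open Finset

lemma summable_aux (k : ℕ) (hk : 2 ≤ k) :
    Summable (fun i : ℕ => 1 / ((i : ℝ) + 1) ^ k) := by
  have h0 : Summable (fun n : ℕ => 1 / (n : ℝ) ^ k) :=
    Real.summable_one_div_nat_pow.mpr (by omega)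
  have h1 := (summable_nat_add_iff 1).mpr h0
  refine h1.congr fun i => by push_cast; ring

lemma hasSum_rzeta (k : ℕ) (hk : 2 ≤ k) :
    HasSum (fun i : ℕ => 1 / ((i : ℝ) + 1) ^ k) (rzeta k) := by
  have h := (summable_aux k hk).hasSum
  have : rzeta k = ∑' i : ℕ, 1 / ((i : ℝ) + 1) ^ k := by
    unfold rzeta
    congr 1
    funext i
    rw [Real.rpow_natCast]
  rwa [this]

lemma summable_32 : Summable (fun i : ℕ => 1 / (((i : ℝ) + 1) * Real.sqrt ((i : ℝ) + 1))) := by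
  have h0 : Summable (fun n : ℕ => 1 / (n : ℝ) ^ (3/2 : ℝ)) :=
    Real.summable_one_div_nat_rpow.mpr (by norm_num)
  have h1 := (summable_nat_add_iff 1).mpr h0
  refine h1.congr fun i => ?_
  have hx : (0:ℝ) < (i : ℝ) + 1 := by positivity
  have : (((i+1 : ℕ) : ℝ)) ^ (3/2 : ℝ) = ((i:ℝ)+1) * Real.sqrt ((i:ℝ)+1) := by
    push_cast
    rw [show (3/2 : ℝ) = 1 + 1/2 by norm_num, Real.rpow_add hx, Real.rpow_one,
      ← Real.sqrt_eq_rpow]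
  rw [this]

lemma summable_prod32 : Summable (fun p : ℕ × ℕ =>
    (1 / (((p.1 : ℝ) + 1) * Real.sqrt ((p.1 : ℝ) + 1))) *
    (1 / (((p.2 : ℝ) + 1) * Real.sqrt ((p.2 : ℝ) + 1)))) := by
  exact Summable.mul_of_nonneg (f := fun i : ℕ => 1 / (((i : ℝ) + 1) * Real.sqrt ((i : ℝ) + 1)))
    (g := fun i : ℕ => 1 / (((i : ℝ) + 1) * Real.sqrt ((i : ℝ) + 1)))
    summable_32 summable_32 (fun i => by positivity) (fun i => by positivity)

-- key inequality: for 1 ≤ k ≤ m (reals), m*sqrt m * (k * sqrt k) ≤ m^2 * k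

lemma sqrt_bound {m k : ℝ} (hk : 1 ≤ k) (hkm : k ≤ m) :
    m * Real.sqrt m * (k * Real.sqrt k) ≤ m ^ 2 * k := by
  have hm : 1 ≤ m := le_trans hk hkm
  have hm0 : (0:ℝ) ≤ m := by linarith
  have h1 : Real.sqrt m * Real.sqrt k ≤ m := by
    calc Real.sqrt m * Real.sqrt k = Real.sqrt (m * k) := (Real.sqrt_mul hm0 k).symm
      _ ≤ Real.sqrt (m * m) := Real.sqrt_le_sqrt (by nlinarith)
      _ = m := Real.sqrt_mul_self hm0
  have h2 : (m * k) * (Real.sqrt m * Real.sqrt k) ≤ (m * k) * m :=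
    mul_le_mul_of_nonneg_left h1 (by nlinarith)
  nlinarith [Real.sqrt_nonneg m, Real.sqrt_nonneg k]

lemma summable_zeta2fun (a b : ℕ) (ha : 2 ≤ a) (hb : 1 ≤ b) :
    Summable (fun q : {q : ℕ × ℕ // q.2 < q.1 ∧ 0 < q.2} =>
      1 / ((q.1.1 : ℝ) ^ a * (q.1.2 : ℝ) ^ b)) := by
  have hinj : Function.Injective
      (fun q : {q : ℕ × ℕ // q.2 < q.1 ∧ 0 < q.2} => (q.1.1 - 1, q.1.2 - 1)) := by
    rintro ⟨⟨m1, k1⟩, h1, h1'⟩ ⟨⟨m2, k2⟩, h2, h2'⟩ h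
    simp only [Prod.mk.injEq] at h
    ext <;> simp <;> omega
  have hM := summable_prod32.comp_injective hinj
  refine Summable.of_nonneg_of_le (fun q => by positivity) (fun q => ?_) hM
  obtain ⟨⟨m, k⟩, hkm, hk⟩ := q
  simp only [Function.comp_apply]
  have e1 : ((m - 1 : ℕ) : ℝ) + 1 = (m : ℝ) := by
    have : 1 ≤ m := by omega
    push_cast [this]; ring
  have e2 : ((k - 1 : ℕ) : ℝ) + 1 = (k : ℝ) := by
    have : 1 ≤ k := by omega
    push_cast [this]; ring
  rw [e1, e2]
  rw [div_mul_div_comm, one_mul]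
  have hk1 : (1:ℝ) ≤ (k:ℝ) := by exact_mod_cast hk
  have hkm1 : (k:ℝ) ≤ (m:ℝ) := by exact_mod_cast le_of_lt hkm
  have hsm : (0:ℝ) < Real.sqrt m := Real.sqrt_pos.mpr (by linarith)
  have hsk : (0:ℝ) < Real.sqrt k := Real.sqrt_pos.mpr (by linarith)
  apply one_div_le_one_div_of_le
  · have hm0 : (0:ℝ) < (m:ℝ) := by linarith
    have hk0 : (0:ℝ) < (k:ℝ) := by linarith
    exact mul_pos (mul_pos hm0 hsm) (mul_pos hk0 hsk)
  · calc (m:ℝ) * Real.sqrt m * ((k:ℝ) * Real.sqrt k) ≤ (m:ℝ)^2 * (k:ℝ) :=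
        sqrt_bound hk1 hkm1
    _ ≤ (m:ℝ)^a * (k:ℝ)^b := by
        have h1 : (m:ℝ)^2 ≤ (m:ℝ)^a := pow_le_pow_right₀ (by linarith) ha
        have h2 : (k:ℝ) ≤ (k:ℝ)^b := le_self_pow₀ (by linarith) (by omega)
        have : (0:ℝ) ≤ (m:ℝ)^2 := by positivity
        nlinarith

lemma hasSum_zeta2 (a b : ℕ) (ha : 2 ≤ a) (hb : 1 ≤ b) :
    HasSum (fun q : {q : ℕ × ℕ // q.2 < q.1 ∧ 0 < q.2} =>
      1 / ((q.1.1 : ℝ) ^ a * (q.1.2 : ℝ) ^ b)) (zeta2 a b) := by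
  have h := (summable_zeta2fun a b ha hb).hasSum
  have : zeta2 a b = ∑' q : {q : ℕ × ℕ // q.2 < q.1 ∧ 0 < q.2},
      1 / ((q.1.1 : ℝ) ^ a * (q.1.2 : ℝ) ^ b) := by
    unfold zeta2
    congr 1
    funext q
    rw [Real.rpow_natCast, Real.rpow_natCast]
  rwa [this]

lemma hasSum_zeta2_indicator (a b : ℕ) (ha : 2 ≤ a) (hb : 1 ≤ b) :
    HasSum (Set.indicator {q : ℕ × ℕ | q.2 < q.1 ∧ 0 < q.2}
      (fun p : ℕ × ℕ => 1 / ((p.1 : ℝ) ^ a * (p.2 : ℝ) ^ b))) (zeta2 a b) := by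
  rw [← hasSum_subtype_iff_indicator]
  exact hasSum_zeta2 a b ha hb

lemma hasSum_zeta2_fiber (a b : ℕ) (ha : 2 ≤ a) (hb : 1 ≤ b) :
    HasSum (fun m : ℕ => ∑ k ∈ Finset.range m, 1 / ((m : ℝ) ^ a * (k : ℝ) ^ b))
      (zeta2 a b) := by
  apply (hasSum_zeta2_indicator a b ha hb).prod_fiberwise
  intro m
  have h1 : HasSum (fun k : ℕ => Set.indicator {q : ℕ × ℕ | q.2 < q.1 ∧ 0 < q.2}
      (fun p : ℕ × ℕ => 1 / ((p.1 : ℝ) ^ a * (p.2 : ℝ) ^ b)) (m, k))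
      (∑ k ∈ Finset.range m, Set.indicator {q : ℕ × ℕ | q.2 < q.1 ∧ 0 < q.2}
      (fun p : ℕ × ℕ => 1 / ((p.1 : ℝ) ^ a * (p.2 : ℝ) ^ b)) (m, k)) := by
    apply hasSum_sum_of_ne_finset_zero
    intro k hk
    apply Set.indicator_of_notMem
    simp only [Set.mem_setOf_eq, not_and]
    intro h
    exact absurd (Finset.mem_range.mpr h) hk
  have heq : (∑ k ∈ Finset.range m, Set.indicator {q : ℕ × ℕ | q.2 < q.1 ∧ 0 < q.2}
      (fun p : ℕ × ℕ => 1 / ((p.1 : ℝ) ^ a * (p.2 : ℝ) ^ b)) (m, k))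
      = ∑ k ∈ Finset.range m, 1 / ((m : ℝ) ^ a * (k : ℝ) ^ b) := by
    apply Finset.sum_congr rfl
    intro k hk
    rcases Nat.eq_zero_or_pos k with rfl | hk0
    · rw [Set.indicator_of_notMem (by simp)]
      rw [Nat.cast_zero, zero_pow (by omega), mul_zero, div_zero]
    · rw [Set.indicator_of_mem]
      exact ⟨Finset.mem_range.mp hk, hk0⟩
  rwa [heq] at h1

lemma hasSum_tele (c : ℕ) :
    HasSum (fun d : ℕ => 1 / ((d : ℝ) + 1) - 1 / ((d : ℝ) + 1 + (c : ℝ)))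
      (∑ j ∈ Finset.range c, 1 / ((j : ℝ) + 1)) := by
  have hnn : ∀ d : ℕ, (0:ℝ) ≤ 1 / ((d : ℝ) + 1) - 1 / ((d : ℝ) + 1 + (c : ℝ)) := by
    intro d
    have h1 : (0:ℝ) < (d:ℝ) + 1 := by positivity
    have h2 : (d:ℝ) + 1 ≤ (d:ℝ) + 1 + c := by
      have := Nat.cast_nonneg (α := ℝ) c; linarith
    have := one_div_le_one_div_of_le h1 h2
    linarith
  have hsum : Summable (fun d : ℕ => 1 / ((d : ℝ) + 1) - 1 / ((d : ℝ) + 1 + (c : ℝ))) := by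
    have hmaj : Summable (fun d : ℕ => (c : ℝ) * (1 / ((d : ℝ) + 1) ^ 2)) := by
      apply Summable.mul_left
      have h0 : Summable (fun n : ℕ => 1 / (n : ℝ) ^ 2) :=
        Real.summable_one_div_nat_pow.mpr (by omega)
      exact ((summable_nat_add_iff 1).mpr h0).congr fun i => by push_cast; ring
    refine Summable.of_nonneg_of_le hnn (fun d => ?_) hmaj
    have h1 : (0:ℝ) < (d:ℝ) + 1 := by positivity
    have h2 : (0:ℝ) < (d:ℝ) + 1 + c := by positivity
    have he : 1 / ((d:ℝ)+1) - 1 / ((d:ℝ)+1+c) = (c:ℝ) / (((d:ℝ)+1)*((d:ℝ)+1+c)) := by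
      field_simp
      ring
    rw [he, ← mul_one_div]
    apply mul_le_mul_of_nonneg_left _ (Nat.cast_nonneg c)
    apply one_div_le_one_div_of_le (by positivity)
    have := Nat.cast_nonneg (α := ℝ) c
    nlinarith
  rw [hsum.hasSum_iff_tendsto_nat]
  have key : ∀ D : ℕ, ∑ d ∈ Finset.range D,
      (1 / ((d : ℝ) + 1) - 1 / ((d : ℝ) + 1 + (c : ℝ)))
      = (∑ j ∈ Finset.range c, 1 / ((j : ℝ) + 1))
        - ∑ j ∈ Finset.range c, 1 / ((D : ℝ) + (j : ℝ) + 1) := by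
    intro D
    rw [Finset.sum_sub_distrib]
    have h1 : ∑ d ∈ Finset.range D, 1 / ((d : ℝ) + 1 + (c : ℝ))
        = ∑ x ∈ Finset.range (c + D), 1 / ((x:ℝ)+1) - ∑ j ∈ Finset.range c, 1 / ((j:ℝ)+1) := by
      rw [Finset.sum_range_add (fun x => 1 / ((x:ℝ)+1)) c D]
      have : ∑ x ∈ Finset.range D, 1 / (((c + x : ℕ):ℝ)+1)
          = ∑ d ∈ Finset.range D, 1 / ((d : ℝ) + 1 + (c : ℝ)) := by
        apply Finset.sum_congr rfl
        intro x _
        push_cast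
        ring_nf
      rw [this]
      ring
    have h2 : ∑ x ∈ Finset.range (c + D), 1 / ((x:ℝ)+1)
        = ∑ x ∈ Finset.range D, 1 / ((x:ℝ)+1) + ∑ j ∈ Finset.range c, 1 / ((D:ℝ)+(j:ℝ)+1) := by
      rw [show c + D = D + c from Nat.add_comm c D, Finset.sum_range_add (fun x => 1 / ((x:ℝ)+1)) D c]
      congr 1
      apply Finset.sum_congr rfl
      intro x _
      push_cast
      ring_nf
    rw [h1, h2]
    ring
  simp only [key]
  have : Filter.Tendsto (fun D : ℕ => ∑ j ∈ Finset.range c, 1 / ((D : ℝ) + (j : ℝ) + 1))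
      Filter.atTop (nhds 0) := by
    have h0 : ∀ j : ℕ, Filter.Tendsto (fun D : ℕ => 1 / ((D : ℝ) + (j : ℝ) + 1))
        Filter.atTop (nhds 0) := by
      intro j
      have ht : Filter.Tendsto (fun D : ℕ => (D:ℝ) + ((j:ℝ) + 1)) Filter.atTop Filter.atTop :=
        Filter.tendsto_atTop_add_const_right _ _ tendsto_natCast_atTop_atTop
      refine ht.inv_tendsto_atTop.congr fun D => ?_
      simp only [Pi.inv_apply, one_div]
      ring_nf
    have := tendsto_finset_sum (Finset.range c) (fun j _ => h0 j)
    simpa using this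
  simpa using Filter.Tendsto.const_sub _ this

lemma hasSum_fiber_harm (N : ℕ) (hN : 2 ≤ N) (i : ℕ) :
    HasSum (fun j : ℕ => 1 / (((i:ℝ) + (j:ℝ) + 2) * ((j:ℝ) + 1) * ((i:ℝ) + 1) ^ (N - 1)))
      ((∑ d ∈ Finset.range (i+1), 1 / ((d:ℝ) + 1)) / ((i:ℝ) + 1) ^ N) := by
  have h := (hasSum_tele (i+1)).mul_left (1 / ((i:ℝ) + 1) ^ N)
  have hfun : (fun j : ℕ => 1 / ((i:ℝ)+1)^N * (1/((j:ℝ)+1) - 1/((j:ℝ)+1+((i+1:ℕ):ℝ))))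
      = fun j : ℕ => 1 / (((i:ℝ)+(j:ℝ)+2) * ((j:ℝ)+1) * ((i:ℝ)+1)^(N-1)) := by
    funext j
    have hx : (0:ℝ) < (i:ℝ)+1 := by positivity
    have hy : (0:ℝ) < (j:ℝ)+1 := by positivity
    have hpow : ((i:ℝ)+1)^N = ((i:ℝ)+1)^(N-1) * ((i:ℝ)+1) := by
      rw [← pow_succ]
      congr 1
      omega
    push_cast
    rw [hpow]
    have hp : (0:ℝ) < ((i:ℝ)+1)^(N-1) := pow_pos hx _
    rw [div_sub_div _ _ (by positivity) (by positivity)]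
    rw [div_mul_div_comm]
    rw [div_eq_div_iff (by positivity) (by positivity)]
    ring
  have hval : 1 / ((i:ℝ)+1)^N * (∑ j ∈ Finset.range (i+1), 1/((j:ℝ)+1))
      = (∑ d ∈ Finset.range (i+1), 1 / ((d:ℝ) + 1)) / ((i:ℝ) + 1) ^ N := by
    rw [one_div_mul_eq_div]
  rw [hfun, hval] at h
  exact h

-- outer sum : HasSum (fun i => B(i+1)/(i+1)^N) (zeta2 N 1 + rzeta (N+1))

lemma hasSum_outer (N : ℕ) (hN : 2 ≤ N) :
    HasSum (fun i : ℕ => (∑ d ∈ Finset.range (i+1), 1 / ((d:ℝ) + 1)) / ((i:ℝ) + 1) ^ N)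
      (zeta2 N 1 + rzeta (N+1)) := by
  have h1 : HasSum (fun i : ℕ => (∑ d ∈ Finset.range i, 1 / ((d:ℝ) + 1)) / ((i:ℝ) + 1) ^ N)
      (zeta2 N 1) := by
    have hf := hasSum_zeta2_fiber N 1 hN le_rfl
    have hfun : (fun m : ℕ => ∑ k ∈ Finset.range m, 1 / ((m : ℝ) ^ N * (k : ℝ) ^ 1))
        = fun m : ℕ => (∑ k ∈ Finset.range m, 1 / (k:ℝ)) / (m:ℝ) ^ N := by
      funext m
      rw [Finset.sum_div]
      apply Finset.sum_congr rfl
      intro k _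
      rw [pow_one, one_div, mul_inv]
      ring
    rw [hfun] at hf
    have hf2 := (hasSum_nat_add_iff' (f := fun m : ℕ =>
      (∑ k ∈ Finset.range m, 1 / (k:ℝ)) / (m:ℝ) ^ N) 1).mpr hf
    simp only [Finset.range_one, Finset.sum_singleton, Finset.range_zero,
      Finset.sum_empty, Nat.cast_zero, zero_div, sub_zero] at hf2
    have hfun2 : (fun i : ℕ => (∑ k ∈ Finset.range (i+1), 1 / (k:ℝ)) / (((i+1 : ℕ)):ℝ) ^ N)
        = fun i : ℕ => (∑ d ∈ Finset.range i, 1 / ((d:ℝ) + 1)) / ((i:ℝ) + 1) ^ N := by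
      funext i
      congr 1
      · rw [Finset.sum_range_succ']
        simp
      · push_cast
        ring
    rw [hfun2] at hf2
    exact_mod_cast hf2
  have h2 : HasSum (fun i : ℕ => 1 / ((i:ℝ) + 1) ^ (N+1)) (rzeta (N+1)) := by
    have := hasSum_rzeta (N+1) (by omega)
    convert this using 2
    push_cast
    ring
  have h3 := h1.add h2
  have hfun3 : (fun i : ℕ => (∑ d ∈ Finset.range i, 1 / ((d:ℝ) + 1)) / ((i:ℝ) + 1) ^ N
        + 1 / ((i:ℝ) + 1) ^ (N+1))
      = fun i : ℕ => (∑ d ∈ Finset.range (i+1), 1 / ((d:ℝ) + 1)) / ((i:ℝ) + 1) ^ N := by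
    funext i
    rw [Finset.sum_range_succ]
    have hx : ((i:ℝ) + 1) ≠ 0 := by positivity
    field_simp
    ring
  rwa [hfun3] at h3

lemma sqrt_bound2 {x y : ℝ} (hx : 1 ≤ x) (hy : 1 ≤ y) :
    x * Real.sqrt x * (y * Real.sqrt y) ≤ (x + y) * y * x := by
  have hx0 : (0:ℝ) ≤ x := by linarith
  have hy0 : (0:ℝ) ≤ y := by linarith
  have h1 : Real.sqrt x * Real.sqrt y ≤ x + y := by
    calc Real.sqrt x * Real.sqrt y = Real.sqrt (x * y) := (Real.sqrt_mul hx0 y).symm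
      _ ≤ Real.sqrt ((x + y) ^ 2) := Real.sqrt_le_sqrt (by nlinarith)
      _ = x + y := Real.sqrt_sq (by linarith)
  have h2 : (x * y) * (Real.sqrt x * Real.sqrt y) ≤ (x * y) * (x + y) :=
    mul_le_mul_of_nonneg_left h1 (by nlinarith)
  nlinarith [Real.sqrt_nonneg x, Real.sqrt_nonneg y]

/-- Equivalence `(i,j) ↦ (i+j+2, i+1)` between `ℕ×ℕ` and pairs `m > k ≥ 1`. -/

def eqP1 : (ℕ × ℕ) ≃ {q : ℕ × ℕ // q.2 < q.1 ∧ 0 < q.2} where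
  toFun p := ⟨(p.1 + p.2 + 2, p.1 + 1), by constructor <;> omega⟩
  invFun q := (q.1.2 - 1, q.1.1 - q.1.2 - 1)
  left_inv := by
    rintro ⟨i, j⟩
    simp only
    ext <;> simp <;> omega
  right_inv := by
    rintro ⟨⟨m, k⟩, h1, h2⟩
    simp only
    ext <;> simp <;> omega

/-- Involution `(m,k) ↦ (m, m-k)` on pairs `m > k ≥ 1`. -/

def eqP2 : {q : ℕ × ℕ // q.2 < q.1 ∧ 0 < q.2} ≃ {q : ℕ × ℕ // q.2 < q.1 ∧ 0 < q.2} where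
  toFun q := ⟨(q.1.1, q.1.1 - q.1.2), by omega, by omega⟩
  invFun q := ⟨(q.1.1, q.1.1 - q.1.2), by omega, by omega⟩
  left_inv := by
    rintro ⟨⟨m, k⟩, h1, h2⟩
    ext <;> simp <;> omega
  right_inv := by
    rintro ⟨⟨m, k⟩, h1, h2⟩
    ext <;> simp <;> omega

lemma hasSum_P1 (N : ℕ) (hN : 2 ≤ N) :
    HasSum (fun q : {q : ℕ × ℕ // q.2 < q.1 ∧ 0 < q.2} =>
      1 / ((q.1.1 : ℝ) * ((q.1.1 : ℝ) - (q.1.2 : ℝ)) * (q.1.2 : ℝ) ^ (N - 1)))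
      (zeta2 N 1 + rzeta (N+1)) := by
  set h : ℕ × ℕ → ℝ := fun p =>
    1 / (((p.1:ℝ) + (p.2:ℝ) + 2) * ((p.2:ℝ) + 1) * ((p.1:ℝ) + 1) ^ (N - 1)) with hh
  have hsumm : Summable h := by
    refine Summable.of_nonneg_of_le (fun p => by positivity) (fun p => ?_) summable_prod32
    have hx : (1:ℝ) ≤ (p.1:ℝ) + 1 := by have := Nat.cast_nonneg (α := ℝ) p.1; linarith
    have hy : (1:ℝ) ≤ (p.2:ℝ) + 1 := by have := Nat.cast_nonneg (α := ℝ) p.2; linarith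
    rw [div_mul_div_comm, one_mul]
    apply one_div_le_one_div_of_le
    · have h1 : (0:ℝ) < Real.sqrt ((p.1:ℝ)+1) := Real.sqrt_pos.mpr (by linarith)
      have h2 : (0:ℝ) < Real.sqrt ((p.2:ℝ)+1) := Real.sqrt_pos.mpr (by linarith)
      have h3 : (0:ℝ) < (p.1:ℝ)+1 := by linarith
      have h4 : (0:ℝ) < (p.2:ℝ)+1 := by linarith
      exact mul_pos (mul_pos h3 h1) (mul_pos h4 h2)
    · calc ((p.1:ℝ)+1) * Real.sqrt ((p.1:ℝ)+1) * (((p.2:ℝ)+1) * Real.sqrt ((p.2:ℝ)+1))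
          ≤ (((p.1:ℝ)+1) + ((p.2:ℝ)+1)) * ((p.2:ℝ)+1) * ((p.1:ℝ)+1) := sqrt_bound2 hx hy
        _ ≤ ((p.1:ℝ) + (p.2:ℝ) + 2) * ((p.2:ℝ) + 1) * ((p.1:ℝ) + 1) ^ (N - 1) := by
            have h5 : ((p.1:ℝ)+1) ≤ ((p.1:ℝ)+1) ^ (N-1) := le_self_pow₀ (by linarith) (by omega)
            have h6 : (0:ℝ) ≤ ((p.1:ℝ) + (p.2:ℝ) + 2) * ((p.2:ℝ) + 1) := by positivity
            nlinarith
  have hG : HasSum h (∑' p, h p) := hsumm.hasSum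
  have houter : HasSum
      (fun i : ℕ => (∑ d ∈ Finset.range (i+1), 1 / ((d:ℝ) + 1)) / ((i:ℝ) + 1) ^ N)
      (∑' p, h p) :=
    hG.prod_fiberwise (fun i => hasSum_fiber_harm N hN i)
  have htot : ∑' p, h p = zeta2 N 1 + rzeta (N+1) := houter.unique (hasSum_outer N hN)
  rw [htot] at hG
  rw [← Equiv.hasSum_iff eqP1]
  have heq : (fun q : {q : ℕ × ℕ // q.2 < q.1 ∧ 0 < q.2} =>
      1 / ((q.1.1 : ℝ) * ((q.1.1 : ℝ) - (q.1.2 : ℝ)) * (q.1.2 : ℝ) ^ (N - 1))) ∘ eqP1 = h := by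
    funext p
    rcases p with ⟨i, j⟩
    simp only [Function.comp_apply, hh, eqP1, Equiv.coe_fn_mk]
    push_cast
    ring_nf
  rw [heq]
  exact hG

lemma hasSum_P2 (N : ℕ) (hN : 2 ≤ N) :
    HasSum (fun q : {q : ℕ × ℕ // q.2 < q.1 ∧ 0 < q.2} =>
      1 / ((q.1.1 : ℝ) ^ N * ((q.1.1 : ℝ) - (q.1.2 : ℝ)))) (zeta2 N 1) := by
  have h := hasSum_zeta2 N 1 hN le_rfl
  rw [← Equiv.hasSum_iff eqP2] at h
  have heq : (fun q : {q : ℕ × ℕ // q.2 < q.1 ∧ 0 < q.2} =>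
      1 / ((q.1.1 : ℝ) ^ N * (q.1.2 : ℝ) ^ (1:ℕ))) ∘ eqP2
      = fun q : {q : ℕ × ℕ // q.2 < q.1 ∧ 0 < q.2} =>
      1 / ((q.1.1 : ℝ) ^ N * ((q.1.1 : ℝ) - (q.1.2 : ℝ))) := by
    funext q
    rcases q with ⟨⟨m, k⟩, h1, h2⟩
    simp only [Function.comp_apply, eqP2, Equiv.coe_fn_mk, pow_one]
    rw [Nat.cast_sub (by omega)]
  rw [heq] at h
  exact_mod_cast h

lemma geom_id (M : ℕ) (x y : ℝ) (hx : x ≠ 0) (hy : y ≠ 0) (hxy : x ≠ y) :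
    ∑ i ∈ Finset.range M, 1 / (x ^ (i+2) * y ^ (M-i))
      = 1 / ((x-y) * x * y ^ M) - 1 / ((x-y) * x ^ (M+1)) := by
  have hxysub : x - y ≠ 0 := sub_ne_zero.mpr hxy
  induction M with
  | zero => simp
  | succ M ih =>
    rw [Finset.sum_range_succ]
    have hstep : ∀ i ∈ Finset.range M, 1 / (x ^ (i+2) * y ^ (M+1-i))
        = (1/y) * (1 / (x ^ (i+2) * y ^ (M-i))) := by
      intro i hi
      have hiM : i ≤ M := le_of_lt (Finset.mem_range.mp hi)
      have : M + 1 - i = (M - i) + 1 := by omega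
      rw [this, pow_succ]
      field_simp
      ring
    rw [Finset.sum_congr rfl hstep, ← Finset.mul_sum, ih]
    have h1 : M + 1 - M = 1 := by omega
    rw [h1, pow_one]
    have hxp : x ^ (M+1) ≠ 0 := pow_ne_zero _ hx
    have hxp2 : x ^ (M+2) ≠ 0 := pow_ne_zero _ hx
    have hyp : y ^ M ≠ 0 := pow_ne_zero _ hy
    have hyp1 : y ^ (M+1) ≠ 0 := pow_ne_zero _ hy
    field_simp
    ring

lemma sum_theorem (N : ℕ) (hN : 2 ≤ N) :
    ∑ a ∈ Finset.Icc 2 N, zeta2 a ((N + 1 - a : ℕ)) = rzeta (N + 1) := by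
  have hA : HasSum (fun q : {q : ℕ × ℕ // q.2 < q.1 ∧ 0 < q.2} =>
      ∑ a ∈ Finset.Icc 2 N, 1 / ((q.1.1 : ℝ) ^ a * (q.1.2 : ℝ) ^ ((N + 1 - a : ℕ))))
      (∑ a ∈ Finset.Icc 2 N, zeta2 a ((N + 1 - a : ℕ))) := by
    apply hasSum_sum
    intro a ha
    have h2 := Finset.mem_Icc.mp ha
    exact hasSum_zeta2 a (N + 1 - a) h2.1 (by omega)
  have hB := (hasSum_P1 N hN).sub (hasSum_P2 N hN)
  have hfun : (fun q : {q : ℕ × ℕ // q.2 < q.1 ∧ 0 < q.2} =>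
        1 / ((q.1.1 : ℝ) * ((q.1.1 : ℝ) - (q.1.2 : ℝ)) * (q.1.2 : ℝ) ^ (N - 1))
        - 1 / ((q.1.1 : ℝ) ^ N * ((q.1.1 : ℝ) - (q.1.2 : ℝ))))
      = fun q : {q : ℕ × ℕ // q.2 < q.1 ∧ 0 < q.2} =>
        ∑ a ∈ Finset.Icc 2 N, 1 / ((q.1.1 : ℝ) ^ a * (q.1.2 : ℝ) ^ ((N + 1 - a : ℕ))) := by
    funext q
    rcases q with ⟨⟨m, k⟩, h1, h2⟩
    simp only
    have hm : (m:ℝ) ≠ 0 := by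
      have : 0 < m := by omega
      positivity
    have hk : (k:ℝ) ≠ 0 := by
      have : 0 < k := h2
      positivity
    have hne : (m:ℝ) ≠ (k:ℝ) := by
      intro hc
      exact absurd (Nat.cast_injective hc) (by omega)
    rw [show Finset.Icc 2 N = Finset.Ico 2 (N+1) from (Finset.Ico_add_one_right_eq_Icc 2 N).symm]
    rw [Finset.sum_Ico_eq_sum_range]
    rw [show N + 1 - 2 = N - 1 by omega]
    have hterm : ∀ i ∈ Finset.range (N - 1),
        1 / ((m : ℝ) ^ (2+i) * (k : ℝ) ^ ((N + 1 - (2+i) : ℕ)))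
        = 1 / ((m : ℝ) ^ (i+2) * (k : ℝ) ^ ((N-1) - i)) := by
      intro i hi
      rw [show 2 + i = i + 2 by omega, show N + 1 - (i + 2) = (N - 1) - i by omega]
    rw [Finset.sum_congr rfl hterm, geom_id (N-1) (m:ℝ) (k:ℝ) hm hk hne]
    have hN1 : N - 1 + 1 = N := by omega
    rw [hN1]
    ring
  rw [hfun] at hB
  have := hA.unique hB
  rw [this]
  ring

/-- `(i,j) ↦ (i+1, j+1)` from pairs with `j < i` to pairs `m > k ≥ 1`. -/

def eqLT : {p : ℕ × ℕ // p.2 < p.1} ≃ {q : ℕ × ℕ // q.2 < q.1 ∧ 0 < q.2} where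
  toFun p := ⟨(p.1.1 + 1, p.1.2 + 1), by omega, by omega⟩
  invFun q := ⟨(q.1.1 - 1, q.1.2 - 1), by omega⟩
  left_inv := by rintro ⟨⟨i, j⟩, h⟩; ext <;> simp
  right_inv := by rintro ⟨⟨m, k⟩, h1, h2⟩; ext <;> simp <;> omega

/-- `(i,j) ↦ (j+1, i+1)` from pairs with `i < j` to pairs `m > k ≥ 1`. -/

def eqGT : {p : ℕ × ℕ // p.1 < p.2} ≃ {q : ℕ × ℕ // q.2 < q.1 ∧ 0 < q.2} where
  toFun p := ⟨(p.1.2 + 1, p.1.1 + 1), by omega, by omega⟩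
  invFun q := ⟨(q.1.2 - 1, q.1.1 - 1), by omega⟩
  left_inv := by rintro ⟨⟨i, j⟩, h⟩; ext <;> simp
  right_inv := by rintro ⟨⟨m, k⟩, h1, h2⟩; ext <;> simp <;> omega

/-- `i ↦ (i,i)` onto the diagonal. -/

def eqDiag : ℕ ≃ {p : ℕ × ℕ // p.1 = p.2} where
  toFun i := ⟨(i, i), rfl⟩
  invFun p := p.1.1
  left_inv := by intro i; rfl
  right_inv := by rintro ⟨⟨i, j⟩, h⟩; exact Subtype.ext (Prod.ext rfl h)

lemma stuffle (a b : ℕ) (ha : 2 ≤ a) (hb : 2 ≤ b) :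
    rzeta a * rzeta b = zeta2 a b + zeta2 b a + rzeta ((a + b : ℕ)) := by
  set f : ℕ × ℕ → ℝ :=
    fun p => 1 / (((p.1:ℝ) + 1) ^ a * ((p.2:ℝ) + 1) ^ b) with hf
  have hfa := hasSum_rzeta a ha
  have hfb := hasSum_rzeta b hb
  have hfg : (fun p : ℕ × ℕ => (1 / ((p.1:ℝ) + 1) ^ a) * (1 / ((p.2:ℝ) + 1) ^ b)) = f :=
    funext fun p => by rw [hf, div_mul_div_comm, one_mul]
  have hsumm : Summable f := by
    have := Summable.mul_of_nonneg hfa.summable hfb.summable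
      (fun i => by positivity) (fun i => by positivity)
    rwa [hfg] at this
  have hmul : HasSum f (rzeta a * rzeta b) := by
    have h := hfa.mul hfb (by rw [hfg]; exact hsumm)
    rwa [hfg] at h
  -- split into three indicator pieces
  set sLT : Set (ℕ × ℕ) := {p | p.2 < p.1} with hsLT
  set sGT : Set (ℕ × ℕ) := {p | p.1 < p.2} with hsGT
  set sDG : Set (ℕ × ℕ) := {p | p.1 = p.2} with hsDG
  have hdecomp : f = fun p => sLT.indicator f p + sGT.indicator f p + sDG.indicator f p := by
    funext p
    simp only [Set.indicator_apply, hsLT, hsGT, hsDG, Set.mem_setOf_eq]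
    rcases lt_trichotomy p.2 p.1 with h | h | h
    · rw [if_pos h, if_neg (by omega), if_neg (by omega)]
      ring
    · rw [if_neg (by omega), if_neg (by omega), if_pos (by omega)]
      ring
    · rw [if_neg (by omega), if_pos h, if_neg (by omega)]
      ring
  have hLT : HasSum (sLT.indicator f) (zeta2 a b) := by
    have h := (Equiv.hasSum_iff eqLT).mpr (hasSum_zeta2 a b ha (by omega))
    have he : (fun q : {q : ℕ × ℕ // q.2 < q.1 ∧ 0 < q.2} =>
        1 / ((q.1.1 : ℝ) ^ a * (q.1.2 : ℝ) ^ b)) ∘ eqLT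
        = (f ∘ (Subtype.val : {p : ℕ × ℕ // p.2 < p.1} → ℕ × ℕ)) := by
      funext p
      rcases p with ⟨⟨i, j⟩, hp⟩
      simp only [Function.comp_apply, eqLT, Equiv.coe_fn_mk, hf]
      push_cast
      ring
    rw [he] at h
    exact hasSum_subtype_iff_indicator.mp h
  have hGT : HasSum (sGT.indicator f) (zeta2 b a) := by
    have h := (Equiv.hasSum_iff eqGT).mpr (hasSum_zeta2 b a hb (by omega))
    have he : (fun q : {q : ℕ × ℕ // q.2 < q.1 ∧ 0 < q.2} =>
        1 / ((q.1.1 : ℝ) ^ b * (q.1.2 : ℝ) ^ a)) ∘ eqGT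
        = (f ∘ (Subtype.val : {p : ℕ × ℕ // p.1 < p.2} → ℕ × ℕ)) := by
      funext p
      rcases p with ⟨⟨i, j⟩, hp⟩
      simp only [Function.comp_apply, eqGT, Equiv.coe_fn_mk, hf]
      push_cast
      ring
    rw [he] at h
    exact hasSum_subtype_iff_indicator.mp h
  have hDG : HasSum (sDG.indicator f) (rzeta ((a + b : ℕ))) := by
    have h0 := hasSum_rzeta (a + b) (by omega)
    have h := (Equiv.hasSum_iff eqDiag.symm).mpr h0
    have he : (fun i : ℕ => 1 / ((i : ℝ) + 1) ^ (a + b)) ∘ eqDiag.symm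
        = (f ∘ (Subtype.val : {p : ℕ × ℕ // p.1 = p.2} → ℕ × ℕ)) := by
      funext p
      rcases p with ⟨⟨i, j⟩, hp⟩
      have hij : i = j := hp
      subst hij
      simp only [Function.comp_apply, eqDiag, Equiv.symm, Equiv.coe_fn_mk, hf]
      rw [pow_add]
    rw [he] at h
    exact hasSum_subtype_iff_indicator.mp h
  have hsum3 := (hLT.add hGT).add hDG
  rw [hdecomp] at hmul
  exact hmul.unique hsum3

theorem stmt7 (n : ℕ) (hn : 2 ≤ n) :
    zeta2 n 1 = (n : ℝ) / 2 * rzeta (n + 1) -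
      1 / 2 * ∑ j ∈ Finset.Icc 2 (n - 1), rzeta j * rzeta (n + 1 - j : ℕ) := by
  have hcast : (((n + 1 : ℕ) : ℝ)) = (n : ℝ) + 1 := by push_cast; ring
  -- sum theorem, with the top term split off
  have hST := sum_theorem n hn
  have hsplit : ∑ a ∈ Finset.Icc 2 n, zeta2 a ((n + 1 - a : ℕ))
      = (∑ a ∈ Finset.Icc 2 (n-1), zeta2 a ((n + 1 - a : ℕ))) + zeta2 n 1 := by
    have h := Finset.sum_Icc_succ_top (a := 2) (b := n - 1) (by omega)
      (fun a => zeta2 a ((n + 1 - a : ℕ)))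
    rw [show n - 1 + 1 = n by omega] at h
    rw [h, show n + 1 - n = 1 by omega]
    norm_num
  -- stuffle applied to each term of the sum
  have hS1 : ∑ j ∈ Finset.Icc 2 (n - 1), rzeta j * rzeta ((n + 1 - j : ℕ))
      = (∑ j ∈ Finset.Icc 2 (n-1), zeta2 j ((n + 1 - j : ℕ)))
        + (∑ j ∈ Finset.Icc 2 (n-1), zeta2 ((n + 1 - j : ℕ)) j)
        + (n - 2 : ℝ) * rzeta ((n + 1 : ℕ)) := by
    have hterm : ∀ j ∈ Finset.Icc 2 (n-1),
        rzeta j * rzeta ((n + 1 - j : ℕ))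
        = zeta2 j ((n + 1 - j : ℕ)) + zeta2 ((n + 1 - j : ℕ)) j + rzeta ((n + 1 : ℕ)) := by
      intro j hj
      have hj2 := Finset.mem_Icc.mp hj
      have h := stuffle j (n + 1 - j) hj2.1 (by omega)
      rw [show j + (n + 1 - j) = n + 1 by omega] at h
      exact h
    rw [Finset.sum_congr rfl hterm]
    rw [Finset.sum_add_distrib, Finset.sum_add_distrib, Finset.sum_const, Nat.card_Icc]
    rw [show n - 1 + 1 - 2 = n - 2 by omega]
    have : ((n - 2 : ℕ) : ℝ) = (n : ℝ) - 2 := by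
      rw [Nat.cast_sub (by omega)]
      norm_num
    rw [nsmul_eq_mul, this]
  -- symmetry of the second sum
  have hswap : ∑ j ∈ Finset.Icc 2 (n-1), zeta2 ((n + 1 - j : ℕ)) j
      = ∑ j ∈ Finset.Icc 2 (n-1), zeta2 j ((n + 1 - j : ℕ)) := by
    apply Finset.sum_nbij' (i := fun j => n + 1 - j) (j := fun j => n + 1 - j)
    · intro a ha
      have := Finset.mem_Icc.mp ha
      exact Finset.mem_Icc.mpr (by omega)
    · intro a ha
      have := Finset.mem_Icc.mp ha
      exact Finset.mem_Icc.mpr (by omega)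
    · intro a ha
      have := Finset.mem_Icc.mp ha
      omega
    · intro a ha
      have := Finset.mem_Icc.mp ha
      omega
    · intro a ha
      have := Finset.mem_Icc.mp ha
      rw [show n + 1 - (n + 1 - a) = a by omega]
  rw [hcast] at hS1
  rw [hsplit] at hST
  rw [hswap] at hS1
  linarith
end

section
/- For an integer n ≥ 3, Σ_{i=1}^{n−2} ζ(n−i, i) = ζ(n). -/
open scoped BigOperators

private lemma hH1 : Summable (fun n : ℕ => 1 / ((n : ℝ) + 1) ^ ((3:ℝ)/2)) := by
  have h := Real.summable_one_div_nat_rpow.mpr (by norm_num : (1:ℝ) < 3/2)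
  have h2 := (summable_nat_add_iff 1).mpr h
  refine h2.congr fun m => ?_
  push_cast
  ring_nf

private lemma summable_master :
    Summable (fun p : ℕ × ℕ =>
      (1 / ((p.1 : ℝ) + 1) ^ ((3:ℝ)/2)) * (1 / ((p.2 : ℝ) + 1) ^ ((3:ℝ)/2))) :=
  by
  have := Summable.mul_of_nonneg (f := fun m : ℕ => 1 / ((m : ℝ) + 1) ^ ((3:ℝ)/2))
    (g := fun m : ℕ => 1 / ((m : ℝ) + 1) ^ ((3:ℝ)/2)) hH1 hH1
    (fun m => by positivity) (fun m => by positivity)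
  exact this

private lemma summable_of_cube (f : ℕ × ℕ → ℝ) (hf : ∀ p, 0 < f p)
    (h : ∀ p : ℕ × ℕ, (((p.1 : ℝ) + 1) * ((p.2 : ℝ) + 1)) ^ 3 ≤ (f p) ^ 2) :
    Summable (fun p => 1 / f p) := by
  refine Summable.of_nonneg_of_le (fun p => (one_div_pos.mpr (hf p)).le) (fun p => ?_) summable_master
  obtain ⟨a, b⟩ := p
  let x : ℝ := (a : ℝ) + 1
  let y : ℝ := (b : ℝ) + 1
  have hx : (0:ℝ) < x := by positivity
  have hy : (0:ℝ) < y := by positivity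
  have hxy : (0:ℝ) ≤ x * y := by positivity
  have hle : (x * y) ^ ((3:ℝ)/2) ≤ f (a, b) := by
    have h1 : ((x * y) ^ ((3:ℝ)/2)) ^ (2:ℕ) = (x * y) ^ (3:ℕ) := by
      rw [← Real.rpow_natCast ((x*y) ^ ((3:ℝ)/2)) 2, ← Real.rpow_mul hxy,
        ← Real.rpow_natCast (x*y) 3]
      norm_num
    have h2 : ((x * y) ^ ((3:ℝ)/2)) ^ (2:ℕ) ≤ (f (a, b)) ^ (2:ℕ) := by rw [h1]; exact h (a, b)
    exact le_of_pow_le_pow_left₀ two_ne_zero (hf (a, b)).le h2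
  calc 1 / f (a, b) ≤ 1 / ((x * y) ^ ((3:ℝ)/2)) :=
        one_div_le_one_div_of_le (by positivity) hle
    _ = 1 / x ^ ((3:ℝ)/2) * (1 / y ^ ((3:ℝ)/2)) := by
        rw [one_div_mul_one_div, Real.mul_rpow hx.le hy.le]


open Filter in
private lemma hasSum_harm (k : ℕ) (hk : 0 < k) :
    HasSum (fun a : ℕ => 1 / (((a:ℝ) + 1) * ((a:ℝ) + 1 + (k:ℝ))))
      ((∑ j ∈ Finset.range k, 1 / ((j:ℝ) + 1)) / (k:ℝ)) := by
  have hk' : (0:ℝ) < k := by exact_mod_cast hk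
  rw [hasSum_iff_tendsto_nat_of_nonneg (fun i => by positivity)]
  set S : ℕ → ℝ := fun M => ∑ j ∈ Finset.range M, 1 / ((j:ℝ) + 1) with hSdef
  set D : ℕ → ℝ := fun N => S (N + k) - S N with hDdef
  have hpart : ∀ N : ℕ, ∑ a ∈ Finset.range N, 1 / (((a:ℝ) + 1) * ((a:ℝ) + 1 + (k:ℝ)))
      = (S k - D N) / (k:ℝ) := by
    intro N
    have h1 : ∀ a : ℕ, 1 / (((a:ℝ) + 1) * ((a:ℝ) + 1 + (k:ℝ)))
        = (1 / ((a:ℝ) + 1) - 1 / ((a:ℝ) + 1 + (k:ℝ))) / (k:ℝ) := by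
      intro a
      have ha1 : ((a:ℝ) + 1) ≠ 0 := by positivity
      have ha2 : ((a:ℝ) + 1 + (k:ℝ)) ≠ 0 := by positivity
      field_simp
      ring
    have h2 : ∑ a ∈ Finset.range N, 1 / ((a:ℝ) + 1 + (k:ℝ)) = S (k + N) - S k := by
      have := Finset.sum_range_add (fun j => 1 / ((j:ℝ) + 1)) k N
      rw [hSdef]
      simp only [this]
      have : ∀ a : ℕ, 1 / (((k + a : ℕ) : ℝ) + 1) = 1 / ((a:ℝ) + 1 + (k:ℝ)) := by
        intro a; push_cast; ring_nf
      rw [Finset.sum_congr rfl fun a _ => (this a).symm]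
      ring
    calc ∑ a ∈ Finset.range N, 1 / (((a:ℝ) + 1) * ((a:ℝ) + 1 + (k:ℝ)))
        = ∑ a ∈ Finset.range N, (1 / ((a:ℝ) + 1) - 1 / ((a:ℝ) + 1 + (k:ℝ))) / (k:ℝ) :=
          Finset.sum_congr rfl fun a _ => h1 a
      _ = (∑ a ∈ Finset.range N, 1 / ((a:ℝ) + 1)
            - ∑ a ∈ Finset.range N, 1 / ((a:ℝ) + 1 + (k:ℝ))) / (k:ℝ) := by
          rw [← Finset.sum_div, Finset.sum_sub_distrib]
      _ = (S N - (S (k + N) - S k)) / (k:ℝ) := by rw [h2]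
      _ = (S k - D N) / (k:ℝ) := by rw [hDdef]; simp only []; rw [Nat.add_comm k N]; ring
  have hDform : ∀ N : ℕ, D N = ∑ a ∈ Finset.range k, 1 / (((N + a : ℕ) : ℝ) + 1) := by
    intro N
    rw [hDdef]
    simp only [hSdef, Finset.sum_range_add]
    ring
  have hD0 : Tendsto D atTop (nhds 0) := by
    have hlim : Tendsto (fun N : ℕ => (k:ℝ) * (1 / ((N:ℝ) + 1))) atTop (nhds 0) := by
      simpa using (tendsto_one_div_add_atTop_nhds_zero_nat).const_mul (k:ℝ)
    refine squeeze_zero (fun N => ?_) (fun N => ?_) hlim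
    · rw [hDform N]
      exact Finset.sum_nonneg fun a _ => by positivity
    · rw [hDform N]
      calc ∑ a ∈ Finset.range k, 1 / (((N + a : ℕ) : ℝ) + 1)
          ≤ ∑ a ∈ Finset.range k, 1 / ((N:ℝ) + 1) := by
            refine Finset.sum_le_sum fun a _ => ?_
            apply one_div_le_one_div_of_le (by positivity)
            push_cast
            linarith [Nat.cast_nonneg (α := ℝ) a]
        _ = (k:ℝ) * (1 / ((N:ℝ) + 1)) := by
            rw [Finset.sum_const, Finset.card_range, nsmul_eq_mul]
  have hfin : Tendsto (fun N : ℕ => (S k - D N) / (k:ℝ)) atTop (nhds (S k / (k:ℝ))) := by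
    have := (tendsto_const_nhds (x := S k) (f := atTop (α := ℕ))).sub hD0
    simpa using this.div_const (k:ℝ)
  exact Tendsto.congr (fun N => (hpart N).symm) hfin

private lemma geom_sum_aux (k d : ℝ) (hk : 0 < k) (hd : 0 < d) :
    ∀ N : ℕ, 1 ≤ N →
      ∑ i ∈ Finset.Icc 1 N, 1 / ((k + d) ^ (N + 2 - i) * k ^ i)
        = 1 / (k ^ N * (k + d) * d) - 1 / ((k + d) ^ (N + 1) * d) := by
  have hkne : k ≠ 0 := ne_of_gt hk
  have hdne : d ≠ 0 := ne_of_gt hd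
  have hm : (0:ℝ) < k + d := by linarith
  have hmne : k + d ≠ 0 := ne_of_gt hm
  intro N
  induction N with
  | zero => intro h; omega
  | succ N ih =>
    intro _
    rcases Nat.eq_zero_or_pos N with hN0 | hN0
    · subst hN0
      rw [show (0:ℕ) + 1 = 1 from rfl, Finset.Icc_self, Finset.sum_singleton]
      norm_num
      field_simp
      ring
    · have hIH := ih hN0
      rw [Finset.sum_Icc_succ_top (by omega : 1 ≤ N + 1)]
      have hcongr : ∑ i ∈ Finset.Icc 1 N, 1 / ((k + d) ^ (N + 1 + 2 - i) * k ^ i)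
          = ∑ i ∈ Finset.Icc 1 N, (1 / (k + d)) * (1 / ((k + d) ^ (N + 2 - i) * k ^ i)) := by
        refine Finset.sum_congr rfl fun i hi => ?_
        have hi' := Finset.mem_Icc.mp hi
        rw [show N + 1 + 2 - i = (N + 2 - i) + 1 by omega, pow_succ]
        field_simp
      rw [hcongr, ← Finset.mul_sum, hIH, show N + 1 + 2 - (N + 1) = 2 by omega]
      field_simp
      ring

private lemma pow_ge_lin (x t : ℕ) (ht : 1 ≤ t) : x + 1 ≤ (x+1)^t := by
  calc x+1 = (x+1)^1 := (pow_one _).symm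
    _ ≤ (x+1)^t := Nat.pow_le_pow_right (by omega) ht

private lemma cubeF (a b i j : ℕ) (hi : 1 ≤ i) (hj : 2 ≤ j) :
    ((a+1)*(b+1))^3 ≤ ((a+b+2)^j*(b+1)^i)^2 := by
  have h1 : ((a+1)*(b+1))^3 ≤ ((a+b+2)^2*(b+1))^2 := by
    calc ((a+1)*(b+1))^3 = (a+1)^3 * (b+1)^2 * (b+1) := by ring
      _ ≤ (a+b+2)^3 * (b+1)^2 * (a+b+2) :=
          Nat.mul_le_mul (Nat.mul_le_mul (Nat.pow_le_pow_left (by omega) 3) (le_refl _))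
            (by omega)
      _ = ((a+b+2)^2*(b+1))^2 := by ring
  refine h1.trans (Nat.pow_le_pow_left ?_ 2)
  exact Nat.mul_le_mul (Nat.pow_le_pow_right (by omega) hj) (pow_ge_lin b i hi)

private lemma cubeA (a b t : ℕ) (ht : 1 ≤ t) :
    ((a+1)*(b+1))^3 ≤ ((b+1)^t*(a+b+2)*(a+1))^2 := by
  have h1 : ((a+1)*(b+1))^3 ≤ ((b+1)*(a+b+2)*(a+1))^2 := by
    calc ((a+1)*(b+1))^3 = (a+1)^2 * (b+1)^2 * ((a+1)*(b+1)) := by ring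
      _ ≤ (a+1)^2 * (b+1)^2 * ((a+b+2)*(a+b+2)) :=
          Nat.mul_le_mul (le_refl _) (Nat.mul_le_mul (by omega) (by omega))
      _ = ((b+1)*(a+b+2)*(a+1))^2 := by ring
  refine h1.trans (Nat.pow_le_pow_left ?_ 2)
  exact Nat.mul_le_mul (Nat.mul_le_mul (pow_ge_lin b t ht) (le_refl _)) (le_refl _)

private lemma cubeB (a b t : ℕ) (ht : 2 ≤ t) :
    ((a+1)*(b+1))^3 ≤ ((a+b+2)^t*(a+1))^2 := by
  have h1 : ((a+1)*(b+1))^3 ≤ ((a+b+2)^2*(a+1))^2 := by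
    calc ((a+1)*(b+1))^3 = (a+1)^2 * ((a+1)*((b+1)*(b+1)*(b+1))) := by ring
      _ ≤ (a+1)^2 * ((a+b+2)*((a+b+2)*(a+b+2)*(a+b+2))) :=
          Nat.mul_le_mul (le_refl _) (Nat.mul_le_mul (by omega)
            (Nat.mul_le_mul (Nat.mul_le_mul (by omega) (by omega)) (by omega)))
      _ = ((a+b+2)^2*(a+1))^2 := by ring
  refine h1.trans (Nat.pow_le_pow_left ?_ 2)
  exact Nat.mul_le_mul (Nat.pow_le_pow_right (by omega) ht) (le_refl _)

private def pairE : ℕ × ℕ ≃ {q : ℕ × ℕ // q.2 < q.1 ∧ 0 < q.2} where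
  toFun p := ⟨(p.1 + p.2 + 2, p.2 + 1), by dsimp only; omega, by dsimp only; omega⟩
  invFun q := (q.1.1 - q.1.2 - 1, q.1.2 - 1)
  left_inv := by rintro ⟨a, b⟩; dsimp only; simp only [Prod.mk.injEq]; omega
  right_inv := by
    rintro ⟨⟨m, kk⟩, h1, h2⟩
    dsimp only at h1 h2 ⊢
    simp only [Subtype.mk.injEq, Prod.mk.injEq]
    omega

private noncomputable def harm (t : ℕ) : ℝ := ∑ j ∈ Finset.range t, 1 / ((j:ℝ) + 1)

private noncomputable def Ff (n i : ℕ) (p : ℕ × ℕ) : ℝ :=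
  1 / (((p.1:ℝ) + (p.2:ℝ) + 2) ^ (n - i) * ((p.2:ℝ) + 1) ^ i)

private noncomputable def Af (n : ℕ) (p : ℕ × ℕ) : ℝ :=
  1 / (((p.2:ℝ) + 1) ^ (n - 2) * ((p.1:ℝ) + (p.2:ℝ) + 2) * ((p.1:ℝ) + 1))

private noncomputable def Bf (n : ℕ) (p : ℕ × ℕ) : ℝ :=
  1 / (((p.1:ℝ) + (p.2:ℝ) + 2) ^ (n - 1) * ((p.1:ℝ) + 1))

private lemma zeta2_eq (n i : ℕ) : zeta2 ((n - i : ℕ) : ℝ) (i : ℝ) = ∑' p : ℕ × ℕ, Ff n i p := by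
  rw [zeta2, ← pairE.tsum_eq]
  refine tsum_congr fun p => ?_
  show 1 / (((p.1 + p.2 + 2 : ℕ) : ℝ) ^ ((n - i : ℕ) : ℝ) * ((p.2 + 1 : ℕ) : ℝ) ^ ((i : ℕ) : ℝ))
      = Ff n i p
  rw [Real.rpow_natCast, Real.rpow_natCast]
  unfold Ff
  push_cast
  ring_nf

private lemma Ff_summable (n i : ℕ) (hn : 3 ≤ n) (hi1 : 1 ≤ i) (hi2 : i ≤ n - 2) :
    Summable (Ff n i) := by
  apply summable_of_cube (fun p => ((p.1:ℝ) + (p.2:ℝ) + 2) ^ (n - i) * ((p.2:ℝ) + 1) ^ i)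
    (fun p => by positivity)
  intro p
  have h := cubeF p.1 p.2 i (n - i) hi1 (by omega)
  exact_mod_cast h

private lemma Af_summable (n : ℕ) (hn : 3 ≤ n) : Summable (Af n) := by
  apply summable_of_cube (fun p => ((p.2:ℝ) + 1) ^ (n - 2) * ((p.1:ℝ) + (p.2:ℝ) + 2) * ((p.1:ℝ) + 1))
    (fun p => by positivity)
  intro p
  have h := cubeA p.1 p.2 (n - 2) (by omega)
  exact_mod_cast h

private lemma Bf_summable (n : ℕ) (hn : 3 ≤ n) : Summable (Bf n) := by
  apply summable_of_cube (fun p => ((p.1:ℝ) + (p.2:ℝ) + 2) ^ (n - 1) * ((p.1:ℝ) + 1))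
    (fun p => by positivity)
  intro p
  have h := cubeB p.1 p.2 (n - 1) (by omega)
  exact_mod_cast h

private lemma Ff_sum (n : ℕ) (hn : 3 ≤ n) (p : ℕ × ℕ) :
    ∑ i ∈ Finset.Icc 1 (n - 2), Ff n i p = Af n p - Bf n p := by
  have hgeo := geom_sum_aux ((p.2:ℝ) + 1) ((p.1:ℝ) + 1) (by positivity) (by positivity)
    (n - 2) (by omega)
  have h1 : ∑ i ∈ Finset.Icc 1 (n - 2), Ff n i p
      = ∑ i ∈ Finset.Icc 1 (n - 2),
          1 / ((((p.2:ℝ) + 1) + ((p.1:ℝ) + 1)) ^ (n - 2 + 2 - i) * ((p.2:ℝ) + 1) ^ i) := by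
    refine Finset.sum_congr rfl fun i hi => ?_
    have hi' := Finset.mem_Icc.mp hi
    rw [show n - 2 + 2 - i = n - i by omega,
      show ((p.2:ℝ) + 1) + ((p.1:ℝ) + 1) = (p.1:ℝ) + (p.2:ℝ) + 2 by ring]
    rfl
  rw [h1, hgeo, show n - 2 + 1 = n - 1 by omega,
    show ((p.2:ℝ) + 1) + ((p.1:ℝ) + 1) = (p.1:ℝ) + (p.2:ℝ) + 2 by ring]
  rfl

private lemma innerA (n b : ℕ) (hn : 3 ≤ n) :
    HasSum (fun a : ℕ => Af n (a, b)) (harm (b + 1) / ((b:ℝ) + 1) ^ (n - 1)) := by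
  have hh := (hasSum_harm (b + 1) (Nat.succ_pos b)).mul_left (1 / (((b:ℝ) + 1) ^ (n - 2)))
  have heq : (fun a : ℕ => 1 / (((b:ℝ) + 1) ^ (n - 2))
        * (1 / (((a:ℝ) + 1) * ((a:ℝ) + 1 + ((b + 1 : ℕ) : ℝ)))))
      = fun a : ℕ => Af n (a, b) := by
    funext a
    unfold Af
    push_cast
    have h1 : ((b:ℝ) + 1) ^ (n - 2) ≠ 0 := by positivity
    have h2 : ((a:ℝ) + 1) ≠ 0 := by positivity
    have h3 : ((a:ℝ) + 1 + ((b:ℝ) + 1)) ≠ 0 := by positivity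
    have h4 : ((a:ℝ) + (b:ℝ) + 2) ≠ 0 := by positivity
    field_simp
    ring
  have hval : 1 / (((b:ℝ) + 1) ^ (n - 2))
        * ((∑ j ∈ Finset.range (b + 1), 1 / ((j:ℝ) + 1)) / ((b + 1 : ℕ) : ℝ))
      = harm (b + 1) / ((b:ℝ) + 1) ^ (n - 1) := by
    unfold harm
    rw [show n - 1 = n - 2 + 1 by omega, pow_succ]
    push_cast
    have h1 : ((b:ℝ) + 1) ^ (n - 2) ≠ 0 := by positivity
    have h2 : ((b:ℝ) + 1) ≠ 0 := by positivity
    field_simp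
  rw [heq, hval] at hh
  exact hh

private lemma A2_summable (n : ℕ) (hn : 3 ≤ n) :
    Summable (fun p : ℕ × ℕ => Af n (p.2, p.1)) := by
  have := ((Equiv.prodComm ℕ ℕ).summable_iff (f := Af n)).mpr (Af_summable n hn)
  refine this.congr fun p => ?_
  rfl

private lemma sumA (n : ℕ) (hn : 3 ≤ n) :
    ∑' p : ℕ × ℕ, Af n p = ∑' b : ℕ, harm (b + 1) / ((b:ℝ) + 1) ^ (n - 1) := by
  have hswap : ∑' p : ℕ × ℕ, Af n p = ∑' p : ℕ × ℕ, Af n (p.2, p.1) := by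
    rw [← ((Equiv.prodComm ℕ ℕ).tsum_eq (Af n))]
    exact tsum_congr fun p => rfl
  rw [hswap, Summable.tsum_prod' (A2_summable n hn) (fun b => (A2_summable n hn).prod_factor b)]
  exact tsum_congr fun b => (innerA n b hn).tsum_eq

private lemma gA_summable (n : ℕ) (hn : 3 ≤ n) :
    Summable (fun b : ℕ => harm (b + 1) / ((b:ℝ) + 1) ^ (n - 1)) := by
  have h0 : (0:ℕ×ℕ→ℝ) ≤ fun p : ℕ × ℕ => Af n (p.2, p.1) := by
    intro p
    unfold Af
    positivity
  have := ((summable_prod_of_nonneg h0).mp (A2_summable n hn)).2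
  exact this.congr fun b => (innerA n b hn).tsum_eq

private def sigE : (Σ s : ℕ, Fin (s + 1)) ≃ ℕ × ℕ where
  toFun x := (x.2.1, x.1 - x.2.1)
  invFun p := ⟨p.1 + p.2, ⟨p.1, by omega⟩⟩
  left_inv := by
    rintro ⟨s, j⟩
    have hj := j.isLt
    refine Sigma.ext ?_ ?_
    · show (j:ℕ) + (s - (j:ℕ)) = s
      omega
    · rw [Fin.heq_ext_iff (by show (j:ℕ) + (s - (j:ℕ)) + 1 = s + 1; omega)]
  right_inv := by
    rintro ⟨a, b⟩
    show ((a : ℕ), a + b - a) = (a, b)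
    simp only [Prod.mk.injEq]
    exact ⟨trivial, by omega⟩

private lemma innerB (n s : ℕ) (hn : 3 ≤ n) :
    ∑' j : Fin (s + 1), Bf n (j.1, s - j.1) = harm (s + 1) / ((s:ℝ) + 2) ^ (n - 1) := by
  rw [tsum_fintype, Fin.sum_univ_eq_sum_range (fun j : ℕ => Bf n (j, s - j)) (s + 1)]
  unfold Bf harm
  rw [Finset.sum_div]
  refine Finset.sum_congr rfl fun j hj => ?_
  have hj' : j ≤ s := by
    have := Finset.mem_range.mp hj
    omega
  rw [show ((s - j : ℕ) : ℝ) = (s:ℝ) - (j:ℝ) from by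
      rw [Nat.cast_sub hj'],
    show (j:ℝ) + ((s:ℝ) - (j:ℝ)) + 2 = (s:ℝ) + 2 from by ring]
  rw [div_div, mul_comm ((j:ℝ) + 1)]

private lemma sumB (n : ℕ) (hn : 3 ≤ n) :
    ∑' p : ℕ × ℕ, Bf n p = ∑' s : ℕ, harm (s + 1) / ((s:ℝ) + 2) ^ (n - 1) := by
  have hs : Summable (fun x : Σ s : ℕ, Fin (s + 1) => Bf n (sigE x)) :=
    (sigE.summable_iff (f := Bf n)).mpr (Bf_summable n hn)
  rw [← sigE.tsum_eq (Bf n), Summable.tsum_sigma' (fun s => Summable.of_finite) hs]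
  refine tsum_congr fun s => ?_
  rw [← innerB n s hn]
  exact tsum_congr fun j => rfl

private lemma gB_summable (n : ℕ) (hn : 3 ≤ n) :
    Summable (fun s : ℕ => harm (s + 1) / ((s:ℝ) + 2) ^ (n - 1)) := by
  have hs : Summable (fun x : Σ s : ℕ, Fin (s + 1) => Bf n (sigE x)) :=
    (sigE.summable_iff (f := Bf n)).mpr (Bf_summable n hn)
  have h0 : ∀ x : Σ s : ℕ, Fin (s + 1), 0 ≤ Bf n (sigE x) := by
    intro x
    unfold Bf
    positivity
  have := ((summable_sigma_of_nonneg h0).mp hs).2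
  refine this.congr fun s => ?_
  rw [← innerB n s hn]
  exact tsum_congr fun j => rfl

theorem stmt8 (n : ℕ) (hn : 3 ≤ n) :
    ∑ i ∈ Finset.Icc 1 (n - 2), zeta2 ((n - i : ℕ) : ℝ) (i : ℝ) = rzeta n := by
  classical
  have hgA := gA_summable n hn
  have hgB := gB_summable n hn
  have hshift : Summable (fun s : ℕ => harm (s + 1 + 1) / (((s + 1 : ℕ) : ℝ) + 1) ^ (n - 1)) := by
    have h := (summable_nat_add_iff
      (f := fun b : ℕ => harm (b + 1) / ((b:ℝ) + 1) ^ (n - 1)) 1).mpr hgA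
    exact h
  have hdiff : ∀ s : ℕ, harm (s + 1 + 1) / (((s + 1 : ℕ) : ℝ) + 1) ^ (n - 1)
      - harm (s + 1) / ((s:ℝ) + 2) ^ (n - 1) = 1 / ((s:ℝ) + 2) ^ n := by
    intro s
    have hX : (0:ℝ) < (s:ℝ) + 2 := by positivity
    have hpow : ((s:ℝ) + 2) ^ n = ((s:ℝ) + 2) ^ (n - 1) * ((s:ℝ) + 2) := by
      rw [← pow_succ, show n - 1 + 1 = n by omega]
    have hharm : harm (s + 1 + 1) = harm (s + 1) + 1 / ((s:ℝ) + 2) := by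
      unfold harm
      rw [Finset.sum_range_succ]
      push_cast
      ring
    rw [show (((s + 1 : ℕ) : ℝ) + 1) = (s:ℝ) + 2 from by push_cast; ring, hharm, hpow]
    field_simp
    ring
  have hsub : (∑' s : ℕ, harm (s + 1 + 1) / (((s + 1 : ℕ) : ℝ) + 1) ^ (n - 1))
      - ∑' s : ℕ, harm (s + 1) / ((s:ℝ) + 2) ^ (n - 1) = ∑' s : ℕ, 1 / ((s:ℝ) + 2) ^ n := by
    rw [← Summable.tsum_sub hshift hgB]
    exact tsum_congr hdiff
  have hz1 : Summable (fun j : ℕ => 1 / ((j:ℝ) + 1) ^ n) := by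
    have h := Real.summable_one_div_nat_pow.mpr (by omega : 1 < n)
    have h2 := (summable_nat_add_iff 1).mpr h
    refine h2.congr fun j => ?_
    push_cast
    ring_nf
  have hrz : rzeta n = 1 + ∑' s : ℕ, 1 / ((s:ℝ) + 2) ^ n := by
    have hcongr : ∀ j : ℕ, 1 / ((j:ℝ) + 1) ^ ((n:ℕ) : ℝ) = 1 / ((j:ℝ) + 1) ^ (n:ℕ) := fun j => by
      rw [Real.rpow_natCast]
    rw [rzeta, tsum_congr hcongr, Summable.tsum_eq_zero_add hz1]
    congr 1
    · norm_num
    · exact tsum_congr fun s => by push_cast; ring_nf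
  calc ∑ i ∈ Finset.Icc 1 (n - 2), zeta2 ((n - i : ℕ) : ℝ) (i : ℝ)
      = ∑ i ∈ Finset.Icc 1 (n - 2), ∑' p : ℕ × ℕ, Ff n i p :=
        Finset.sum_congr rfl fun i _ => zeta2_eq n i
    _ = ∑' p : ℕ × ℕ, ∑ i ∈ Finset.Icc 1 (n - 2), Ff n i p := by
        refine (Summable.tsum_finsetSum fun i hi => ?_).symm
        have hi' := Finset.mem_Icc.mp hi
        exact Ff_summable n i hn hi'.1 hi'.2
    _ = ∑' p : ℕ × ℕ, (Af n p - Bf n p) := tsum_congr (Ff_sum n hn)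
    _ = (∑' p : ℕ × ℕ, Af n p) - ∑' p : ℕ × ℕ, Bf n p :=
        Summable.tsum_sub (Af_summable n hn) (Bf_summable n hn)
    _ = (∑' b : ℕ, harm (b + 1) / ((b:ℝ) + 1) ^ (n - 1))
          - ∑' s : ℕ, harm (s + 1) / ((s:ℝ) + 2) ^ (n - 1) := by
        rw [sumA n hn, sumB n hn]
    _ = rzeta n := by
        rw [Summable.tsum_eq_zero_add hgA, hrz]
        have h0 : harm (0 + 1) / (((0:ℕ):ℝ) + 1) ^ (n - 1) = 1 := by
          unfold harm
          norm_num
        rw [h0]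
        linarith [hsub]
end

section
/- ζ(2,1) = ζ(3). -/
open scoped BigOperators

open ENNReal Filter

namespace Stmt10Aux

/-- the real summand of ζ(2,1). -/
noncomputable def f2 (q : ℕ × ℕ) : ℝ := 1 / ((q.1 : ℝ) ^ 2 * (q.2 : ℝ))

/-- ENNReal version of ζ(2,1). -/
noncomputable def Z2 : ℝ≥0∞ :=
  ∑' q : {q : ℕ × ℕ // q.2 < q.1 ∧ 0 < q.2}, ENNReal.ofReal (f2 q.1)

/-- ENNReal version of ζ(3). -/
noncomputable def Z3 : ℝ≥0∞ := ∑' n : ℕ, ENNReal.ofReal (1 / ((n : ℝ) + 1) ^ 3)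

/-- grid summand `1/((j+k+2)^2 (k+1))`. -/
noncomputable def B (j k : ℕ) : ℝ≥0∞ :=
  ENNReal.ofReal (1 / (((j : ℝ) + (k : ℝ) + 2) ^ 2 * ((k : ℝ) + 1)))

/-- grid summand `1/((j+1)(k+1)(j+k+2))`. -/
noncomputable def A (j k : ℕ) : ℝ≥0∞ :=
  ENNReal.ofReal (1 / (((j : ℝ) + 1) * ((k : ℝ) + 1) * ((j : ℝ) + (k : ℝ) + 2)))

/-- harmonic numbers. -/
noncomputable def H (n : ℕ) : ℝ := ∑ i ∈ Finset.range n, 1 / ((i : ℝ) + 1)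

lemma H_nonneg (n : ℕ) : 0 ≤ H n := by
  apply Finset.sum_nonneg; intro i _; positivity

/-- the equivalence between the grid and the index set of ζ(2,1). -/
noncomputable def e1 : ℕ × ℕ ≃ {q : ℕ × ℕ // q.2 < q.1 ∧ 0 < q.2} where
  toFun p := ⟨(p.1 + p.2 + 2, p.2 + 1), by omega⟩
  invFun q := (q.1.1 - q.1.2 - 1, q.1.2 - 1)
  left_inv p := by
    rcases p with ⟨j, k⟩
    simp only [Prod.mk.injEq]
    omega
  right_inv q := by
    rcases q with ⟨⟨m, n⟩, h⟩
    apply Subtype.ext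
    simp only [Prod.mk.injEq]
    obtain ⟨h1, h2⟩ := h
    omega

lemma grid_eq_Z2 : (∑' p : ℕ × ℕ, B p.1 p.2) = Z2 := by
  rw [Z2, ← e1.tsum_eq (fun q => ENNReal.ofReal (f2 q.1))]
  apply tsum_congr
  rintro ⟨j, k⟩
  simp only [B, e1, Equiv.coe_fn_mk, f2]
  congr 2
  push_cast
  ring

lemma A_split (j k : ℕ) : A j k = B j k + B k j := by
  rw [A, B, B, ← ENNReal.ofReal_add (by positivity) (by positivity)]
  congr 1
  have hj : (0:ℝ) < (j:ℝ) + 1 := by positivity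
  have hk : (0:ℝ) < (k:ℝ) + 1 := by positivity
  have hs : (0:ℝ) < (j:ℝ) + (k:ℝ) + 2 := by positivity
  field_simp
  ring

lemma sum_A_eq_two_Z2 : (∑' p : ℕ × ℕ, A p.1 p.2) = Z2 + Z2 := by
  have h1 : (∑' p : ℕ × ℕ, A p.1 p.2) =
      (∑' p : ℕ × ℕ, B p.1 p.2) + ∑' p : ℕ × ℕ, B p.2 p.1 := by
    rw [← ENNReal.tsum_add]
    exact tsum_congr fun p => A_split p.1 p.2
  have h2 : (∑' p : ℕ × ℕ, B p.2 p.1) = ∑' p : ℕ × ℕ, B p.1 p.2 :=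
    (Equiv.prodComm ℕ ℕ).tsum_eq (fun p => B p.1 p.2)
  rw [h1, h2, grid_eq_Z2]

/-- telescoping: `∑_k (1/(k+1) - 1/(j+k+2)) = H (j+1)`. -/
lemma hasSum_teles (j : ℕ) :
    HasSum (fun k : ℕ => 1 / ((k : ℝ) + 1) - 1 / ((j : ℝ) + (k : ℝ) + 2)) (H (j + 1)) := by
  set u : ℕ → ℝ := fun i => 1 / ((i : ℝ) + 1) with hu
  have key : ∀ N : ℕ, ∑ k ∈ Finset.range N, (1 / ((k : ℝ) + 1) - 1 / ((j : ℝ) + (k : ℝ) + 2))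
      = H (j + 1) - ∑ i ∈ Finset.range (j + 1), 1 / ((N : ℝ) + (i : ℝ) + 1) := by
    intro N
    have h1 : ∑ k ∈ Finset.range N, (1 / ((k : ℝ) + 1) - 1 / ((j : ℝ) + (k : ℝ) + 2))
        = (∑ k ∈ Finset.range N, u k) - ∑ k ∈ Finset.range N, u (j + 1 + k) := by
      rw [← Finset.sum_sub_distrib]
      apply Finset.sum_congr rfl
      intro k _
      simp only [hu]
      push_cast
      ring_nf
    have h2 : ∑ k ∈ Finset.range N, u (j + 1 + k) = ∑ i ∈ Finset.Ico (j+1) (j+1+N), u i := by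
      rw [Finset.sum_Ico_eq_sum_range]
      simp
    have h3 : (∑ i ∈ Finset.range N, u i) + ∑ i ∈ Finset.Ico N (j+1+N), u i
        = ∑ i ∈ Finset.range (j+1+N), u i := by
      rw [Finset.range_eq_Ico, Finset.range_eq_Ico]
      exact Finset.sum_Ico_consecutive u (Nat.zero_le N) (by omega : N ≤ j+1+N)
    have h4 : (∑ i ∈ Finset.range (j+1), u i) + ∑ i ∈ Finset.Ico (j+1) (j+1+N), u i
        = ∑ i ∈ Finset.range (j+1+N), u i := by
      rw [Finset.range_eq_Ico, Finset.range_eq_Ico]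
      exact Finset.sum_Ico_consecutive u (Nat.zero_le (j+1)) (by omega : j+1 ≤ j+1+N)
    have h5 : ∑ i ∈ Finset.Ico N (j+1+N), u i = ∑ i ∈ Finset.range (j+1), 1 / ((N : ℝ) + (i : ℝ) + 1) := by
      rw [Finset.sum_Ico_eq_sum_range]
      apply Finset.sum_congr (by congr 1; omega)
      intro i _
      simp only [hu]
      push_cast
      ring_nf
    rw [h1, h2, ← h5]
    have : H (j+1) = ∑ i ∈ Finset.range (j+1), u i := rfl
    rw [this]
    linarith
  have hnn : ∀ k : ℕ, 0 ≤ 1 / ((k : ℝ) + 1) - 1 / ((j : ℝ) + (k : ℝ) + 2) := by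
    intro k
    have h1 : 1 / ((j : ℝ) + (k : ℝ) + 2) ≤ 1 / ((k : ℝ) + 1) := by
      apply one_div_le_one_div_of_le (by positivity)
        (by push_cast; linarith [Nat.cast_nonneg (α := ℝ) j])
    linarith
  rw [hasSum_iff_tendsto_nat_of_nonneg hnn]
  have htend : Tendsto (fun N : ℕ => ∑ i ∈ Finset.range (j + 1), 1 / ((N : ℝ) + (i : ℝ) + 1))
      atTop (nhds 0) := by
    have h0 : (0 : ℝ) = ∑ _i ∈ Finset.range (j + 1), (0:ℝ) := by simp
    rw [h0]
    apply tendsto_finset_sum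
    intro i _
    have hT : Tendsto (fun N : ℕ => ((N : ℝ) + ((i : ℝ) + 1))) atTop atTop :=
      tendsto_atTop_add_const_right atTop _ tendsto_natCast_atTop_atTop
    have := tendsto_inv_atTop_zero.comp hT
    simpa [one_div, Function.comp_def, add_assoc] using this
  have hfin := tendsto_const_nhds (x := H (j+1)) (f := atTop (α := ℕ)) |>.sub htend
  rw [sub_zero] at hfin
  exact hfin.congr (fun N => (key N).symm)

lemma innerSum (j : ℕ) :
    (∑' k : ℕ, A j k) = ENNReal.ofReal (1 / ((j : ℝ) + 1) ^ 2 * H (j + 1)) := by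
  have hj : (0:ℝ) < (j:ℝ) + 1 := by positivity
  have hpt : ∀ k : ℕ, A j k = ENNReal.ofReal
      (1 / ((j : ℝ) + 1) ^ 2 * (1 / ((k : ℝ) + 1) - 1 / ((j : ℝ) + (k : ℝ) + 2))) := by
    intro k
    rw [A]
    congr 1
    have hk : (0:ℝ) < (k:ℝ) + 1 := by positivity
    have hs : (0:ℝ) < (j:ℝ) + (k:ℝ) + 2 := by positivity
    field_simp
    ring
  have hnn : ∀ k : ℕ, 0 ≤ 1 / ((j : ℝ) + 1) ^ 2 * (1 / ((k : ℝ) + 1) - 1 / ((j : ℝ) + (k : ℝ) + 2)) := by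
    intro k
    apply mul_nonneg (by positivity)
    have : 1 / ((j : ℝ) + (k : ℝ) + 2) ≤ 1 / ((k : ℝ) + 1) :=
      one_div_le_one_div_of_le (by positivity)
        (by linarith [Nat.cast_nonneg (α := ℝ) j, Nat.cast_nonneg (α := ℝ) k])
    linarith
  calc (∑' k : ℕ, A j k)
      = ∑' k : ℕ, ENNReal.ofReal (1 / ((j : ℝ) + 1) ^ 2 * (1 / ((k : ℝ) + 1) - 1 / ((j : ℝ) + (k : ℝ) + 2))) :=
        tsum_congr hpt
    _ = ENNReal.ofReal (∑' k : ℕ, 1 / ((j : ℝ) + 1) ^ 2 * (1 / ((k : ℝ) + 1) - 1 / ((j : ℝ) + (k : ℝ) + 2))) :=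
        (ENNReal.ofReal_tsum_of_nonneg hnn ((hasSum_teles j).summable.mul_left _)).symm
    _ = ENNReal.ofReal (1 / ((j : ℝ) + 1) ^ 2 * H (j + 1)) := by
        rw [tsum_mul_left, (hasSum_teles j).tsum_eq]

lemma hist : (∑' j : ℕ, ENNReal.ofReal (1 / ((j:ℝ)+1) ^ 2 * H j)) = Z2 := by
  have lhs_eq : ∀ j : ℕ, ENNReal.ofReal (1 / ((j:ℝ)+1) ^ 2 * H j)
      = ∑ i ∈ Finset.range j, ENNReal.ofReal (f2 (j + 1, 1 + i)) := by
    intro j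
    rw [H, Finset.mul_sum, ENNReal.ofReal_sum_of_nonneg (fun i _ => by positivity)]
    apply Finset.sum_congr rfl
    intro i _
    congr 1
    simp only [f2]
    push_cast
    have h1 : (0:ℝ) < (j:ℝ)+1 := by positivity
    have h2 : (0:ℝ) < (i:ℝ)+1 := by positivity
    field_simp
    ring
  have hsub : Z2 = ∑' q : ℕ × ℕ, Set.indicator {q : ℕ × ℕ | q.2 < q.1 ∧ 0 < q.2}
      (fun q => ENNReal.ofReal (f2 q)) q :=
    tsum_subtype {q : ℕ × ℕ | q.2 < q.1 ∧ 0 < q.2} (fun q => ENNReal.ofReal (f2 q))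
  have inn : ∀ m : ℕ, (∑' n : ℕ, Set.indicator {q : ℕ × ℕ | q.2 < q.1 ∧ 0 < q.2}
      (fun q => ENNReal.ofReal (f2 q)) (m, n))
      = ∑ i ∈ Finset.range (m-1), ENNReal.ofReal (f2 (m, 1 + i)) := by
    intro m
    rw [tsum_eq_sum (s := Finset.Ico 1 m)
      (fun n hn => Set.indicator_of_notMem
        (by simp only [Finset.mem_Ico, not_and, not_lt] at hn
            simp only [Set.mem_setOf_eq, not_and, not_lt]; omega) _)]
    rw [Finset.sum_Ico_eq_sum_range]
    apply Finset.sum_congr (by congr 1)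
    intro i hi
    simp only [Finset.mem_range] at hi
    rw [Set.indicator_of_mem]
    simp only [Set.mem_setOf_eq]
    omega
  have G0 : (∑ i ∈ Finset.range (0-1), ENNReal.ofReal (f2 (0, 1 + i))) = 0 := by simp
  rw [hsub, ENNReal.tsum_prod']
  have hshift := tsum_eq_zero_add'
    (f := fun m : ℕ => ∑' n : ℕ, Set.indicator {q : ℕ × ℕ | q.2 < q.1 ∧ 0 < q.2}
      (fun q => ENNReal.ofReal (f2 q)) (m, n)) ENNReal.summable
  rw [hshift]
  simp only [inn]
  rw [G0, zero_add]
  apply (tsum_congr (fun j => ?_)).symm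
  rw [lhs_eq j]
  simp

lemma sum_A_eq_Z2_add_Z3 : (∑' p : ℕ × ℕ, A p.1 p.2) = Z2 + Z3 := by
  rw [ENNReal.tsum_prod']
  have step : ∀ j : ℕ, (∑' k : ℕ, A j k)
      = ENNReal.ofReal (1 / ((j:ℝ)+1) ^ 2 * H j) + ENNReal.ofReal (1 / ((j:ℝ)+1) ^ 3) := by
    intro j
    rw [innerSum j]
    have hH : H (j+1) = H j + 1 / ((j:ℝ)+1) := Finset.sum_range_succ _ j
    have hj : (0:ℝ) < (j:ℝ)+1 := by positivity
    rw [hH, mul_add, ← ENNReal.ofReal_add (mul_nonneg (by positivity) (H_nonneg j)) (by positivity)]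
    congr 1
    field_simp
  rw [tsum_congr step, ENNReal.tsum_add, hist, Z3]

lemma Z2_ne_top : Z2 ≠ ⊤ := by
  rw [← grid_eq_Z2]
  set u : ℕ → ℝ := fun n => 1 / Real.sqrt ((n:ℝ)+1) ^ 3 with hu
  have hu0 : ∀ n, 0 ≤ u n := fun n => by positivity
  have husum : Summable u := by
    have h1 : Summable (fun n : ℕ => 1 / ((n:ℝ)) ^ ((3:ℝ)/2)) :=
      Real.summable_one_div_nat_rpow.2 (by norm_num)
    have h2 := (summable_nat_add_iff 1).2 h1
    apply h2.congr
    intro n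
    simp only [hu]
    have h0 : (0:ℝ) ≤ (n:ℝ)+1 := by positivity
    have : ((n:ℝ)+1) ^ ((3:ℝ)/2) = Real.sqrt ((n:ℝ)+1) ^ 3 := by
      rw [show ((3:ℝ)/2) = (1/2 : ℝ) * ((3:ℕ):ℝ) by norm_num, Real.rpow_mul h0,
        Real.rpow_natCast, ← Real.sqrt_eq_rpow]
    rw [← this]
    push_cast
    ring_nf
  have key : ∀ j k : ℕ, B j k ≤ ENNReal.ofReal (u j) * ENNReal.ofReal (u k) := by
    intro j k
    rw [← ENNReal.ofReal_mul (hu0 j)]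
    apply ENNReal.ofReal_le_ofReal
    simp only [hu]
    set a := Real.sqrt ((j:ℝ)+1) with ha
    set b := Real.sqrt ((k:ℝ)+1) with hb
    have ha0 : 0 ≤ a := Real.sqrt_nonneg _
    have hb0 : 0 ≤ b := Real.sqrt_nonneg _
    have ha2 : a ^ 2 = (j:ℝ)+1 := Real.sq_sqrt (by positivity)
    have hb2 : b ^ 2 = (k:ℝ)+1 := Real.sq_sqrt (by positivity)
    have hineq : a^3 * b^3 ≤ ((j:ℝ)+(k:ℝ)+2)^2 * ((k:ℝ)+1) := by
      have hjk : (j:ℝ)+(k:ℝ)+2 = a^2 + b^2 := by rw [ha2, hb2]; ring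
      rw [hjk, ← hb2]
      have h1 : a^3*b ≤ (a^2+b^2)^2 := by
        nlinarith [mul_nonneg (sq_nonneg a) (sq_nonneg (a-b)),
          mul_nonneg (mul_nonneg (mul_nonneg ha0 ha0) ha0) hb0,
          mul_nonneg (sq_nonneg a) (sq_nonneg b), sq_nonneg (b^2)]
      calc a^3*b^3 = (a^3*b)*b^2 := by ring
        _ ≤ (a^2+b^2)^2 * b^2 := mul_le_mul_of_nonneg_right h1 (sq_nonneg b)
    rw [div_mul_div_comm, one_mul]
    apply one_div_le_one_div_of_le (by positivity) hineq
  have hS : (∑' n : ℕ, ENNReal.ofReal (u n)) ≠ ⊤ := by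
    rw [← ENNReal.ofReal_tsum_of_nonneg hu0 husum]
    exact ENNReal.ofReal_ne_top
  have hle : (∑' p : ℕ × ℕ, B p.1 p.2)
      ≤ (∑' n : ℕ, ENNReal.ofReal (u n)) * (∑' n : ℕ, ENNReal.ofReal (u n)) := by
    calc (∑' p : ℕ × ℕ, B p.1 p.2)
        ≤ ∑' p : ℕ × ℕ, ENNReal.ofReal (u p.1) * ENNReal.ofReal (u p.2) :=
          ENNReal.tsum_le_tsum (fun p => key p.1 p.2)
      _ = _ := by
          rw [ENNReal.tsum_prod']
          simp_rw [ENNReal.tsum_mul_left]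
          rw [ENNReal.tsum_mul_right]
  exact ne_top_of_le_ne_top (ENNReal.mul_ne_top hS hS) hle

lemma Z2_eq_Z3 : Z2 = Z3 := by
  rw [← ENNReal.add_right_inj Z2_ne_top, ← sum_A_eq_two_Z2, sum_A_eq_Z2_add_Z3]

lemma tsum_ofReal_eq {ι : Type*} (f : ι → ℝ) (hf : ∀ i, 0 ≤ f i)
    (h : (∑' i, ENNReal.ofReal (f i)) ≠ ⊤) :
    ∑' i, f i = (∑' i, ENNReal.ofReal (f i)).toReal := by
  have hs : Summable f := by
    have := ENNReal.summable_toReal h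
    simpa [ENNReal.toReal_ofReal (hf _)] using this
  rw [← ENNReal.ofReal_tsum_of_nonneg hf hs, ENNReal.toReal_ofReal (tsum_nonneg hf)]

end Stmt10Aux

open Stmt10Aux in
theorem stmt10 : zeta2 2 1 = rzeta 3 := by
  have h2 : zeta2 2 1 = ∑' q : {q : ℕ × ℕ // q.2 < q.1 ∧ 0 < q.2}, f2 q.1 := by
    unfold zeta2
    apply tsum_congr
    intro q
    rw [f2, Real.rpow_one, show ((2:ℝ)) = ((2:ℕ):ℝ) by norm_num, Real.rpow_natCast]
  have h3 : rzeta 3 = ∑' n : ℕ, 1 / ((n : ℝ) + 1) ^ 3 := by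
    unfold rzeta
    apply tsum_congr
    intro n
    rw [show ((3:ℝ)) = ((3:ℕ):ℝ) by norm_num, Real.rpow_natCast]
  have hZ3top : Z3 ≠ ⊤ := Z2_eq_Z3 ▸ Z2_ne_top
  rw [h2, h3]
  rw [tsum_ofReal_eq _ (fun q => by unfold f2; positivity) (by exact Z2_ne_top)]
  rw [tsum_ofReal_eq (fun n : ℕ => 1 / ((n : ℝ) + 1) ^ 3) (fun n => by positivity)
    (by exact hZ3top)]
  exact congrArg ENNReal.toReal Z2_eq_Z3
end

section
/- For real r > 1 and q > 2 − r, ζ(r,q) = (1/Γ(r)) ∫_0^∞ t^{r−1} Li_q(e^{−t}) / (e^t − 1) dt. -/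
open scoped BigOperators

/-- Reindexing equivalence for the double zeta sum. -/
def pairEquivStmt11 : (ℕ × ℕ) ≃ {q : ℕ × ℕ // q.2 < q.1 ∧ 0 < q.2} where
  toFun p := ⟨(p.1 + p.2 + 2, p.2 + 1), by omega⟩
  invFun s := (s.1.1 - s.1.2 - 1, s.1.2 - 1)
  left_inv p := by ext <;> simp <;> omega
  right_inv s := by
    obtain ⟨⟨m, n⟩, h⟩ := s
    simp only [Subtype.mk.injEq, Prod.mk.injEq]
    omega

lemma zeta2_eq_stmt11 (a b : ℝ) :
    zeta2 a b = ∑' p : ℕ × ℕ, 1 / (((p.1 : ℝ) + p.2 + 2) ^ a * ((p.2 : ℝ) + 1) ^ b) := by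
  rw [zeta2, ← pairEquivStmt11.tsum_eq]
  congr 1
  ext p
  simp only [pairEquivStmt11, Equiv.coe_fn_mk]
  push_cast
  ring_nf

lemma summable_shift_stmt11 (e : ℝ) (he : 1 < e) :
    Summable fun n : ℕ => ((n : ℝ) + 1) ^ (-e) := by
  have h := (Real.summable_nat_rpow (p := -e)).mpr (by linarith)
  have := (summable_nat_add_iff 1).mpr h
  refine this.congr fun n => ?_
  push_cast
  ring_nf

lemma aux_summable_stmt11 {r q : ℝ} (hr : 1 < r) (hq : 2 - r < q) :
    Summable fun p : ℕ × ℕ => 1 / (((p.1 : ℝ) + p.2 + 2) ^ r * ((p.2 : ℝ) + 1) ^ q) := by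
  set δ : ℝ := min (r - 1) ((q + r - 2) / 2) with hδdef
  have hδ0 : 0 < δ := lt_min (by linarith) (by linarith)
  have hδ1 : δ ≤ r - 1 := min_le_left _ _
  have hδ2 : δ < q + r - 2 := lt_of_le_of_lt (min_le_right _ _) (by linarith)
  have hsum : Summable fun p : ℕ × ℕ =>
      ((p.1 : ℝ) + 1) ^ (-(1 + δ)) * ((p.2 : ℝ) + 1) ^ (-(q + r - 1 - δ)) := by
    apply Summable.mul_of_nonneg (summable_shift_stmt11 _ (by linarith))
      (summable_shift_stmt11 _ (by linarith)) <;>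
      exact Pi.le_def.mpr fun n => Real.rpow_nonneg (by positivity) _
  refine Summable.of_nonneg_of_le (fun p => by positivity) (fun p => ?_) hsum
  obtain ⟨k, j⟩ := p
  dsimp only
  set m : ℝ := (k : ℝ) + j + 2 with hm
  set n : ℝ := (j : ℝ) + 1 with hn
  have hk0 : (0:ℝ) ≤ k := Nat.cast_nonneg k
  have hj0 : (0:ℝ) ≤ j := Nat.cast_nonneg j
  have hmpos : (0:ℝ) < m := by rw [hm]; linarith
  have hnpos : (0:ℝ) < n := by rw [hn]; linarith
  have hnm : n ≤ m := by rw [hm, hn]; linarith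
  have hkm : (k : ℝ) + 1 ≤ m := by rw [hm]; linarith
  have e1 : (1:ℝ) / (m ^ r * n ^ q) = m ^ (-(1 + δ)) * m ^ (-(r - 1 - δ)) * n ^ (-q) := by
    rw [← Real.rpow_add hmpos, show -(1+δ) + -(r-1-δ) = -r by ring,
      Real.rpow_neg hmpos.le, Real.rpow_neg hnpos.le, one_div, mul_inv]
  rw [e1]
  have h1 : m ^ (-(1 + δ)) ≤ ((k : ℝ) + 1) ^ (-(1 + δ)) :=
    Real.rpow_le_rpow_of_nonpos (by positivity) hkm (by linarith)
  have h2 : m ^ (-(r - 1 - δ)) ≤ n ^ (-(r - 1 - δ)) :=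
    Real.rpow_le_rpow_of_nonpos hnpos hnm (by linarith)
  have h3 : n ^ (-(r - 1 - δ)) * n ^ (-q) = n ^ (-(q + r - 1 - δ)) := by
    rw [← Real.rpow_add hnpos]; ring_nf
  calc m ^ (-(1 + δ)) * m ^ (-(r - 1 - δ)) * n ^ (-q)
      ≤ ((k : ℝ) + 1) ^ (-(1 + δ)) * (n ^ (-(r - 1 - δ)) * n ^ (-q)) := by
        rw [mul_assoc]
        exact mul_le_mul h1 (mul_le_mul h2 le_rfl (Real.rpow_nonneg hnpos.le _)
            (Real.rpow_nonneg hnpos.le _)) (by positivity) (by positivity)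
    _ = ((k : ℝ) + 1) ^ (-(1 + δ)) * n ^ (-(q + r - 1 - δ)) := by rw [h3]

lemma polyLog_summable_stmt11 {x : ℝ} (hx : 0 ≤ x) (hx1 : x < 1) (p : ℝ) :
    Summable fun j : ℕ => x ^ (j + 1) / ((j : ℝ) + 1) ^ p := by
  set K : ℕ := ⌈-p⌉₊ with hK
  have hbig : Summable fun j : ℕ => ((j : ℝ) + 1) ^ K * x ^ (j + 1) := by
    have h := summable_pow_mul_geometric_of_norm_lt_one (R := ℝ) K
      (r := x) (by rwa [Real.norm_eq_abs, abs_of_nonneg hx])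
    have h2 := (summable_nat_add_iff 1).mpr h
    refine h2.congr fun j => ?_
    push_cast
    ring
  refine hbig.of_nonneg_of_le (fun j => by positivity) fun j => ?_
  have h1 : (1:ℝ) ≤ (j:ℝ) + 1 := by linarith [Nat.cast_nonneg (α := ℝ) j]
  have hle : ((j : ℝ) + 1) ^ (-p) ≤ ((j : ℝ) + 1) ^ (K : ℝ) :=
    Real.rpow_le_rpow_of_exponent_le h1 (le_trans (Nat.le_ceil _) (by exact_mod_cast le_rfl))
  rw [div_eq_mul_inv, ← Real.rpow_neg (by linarith), mul_comm]
  calc ((j:ℝ)+1) ^ (-p) * x ^ (j+1) ≤ ((j:ℝ)+1) ^ (K:ℝ) * x ^ (j+1) := by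
        exact mul_le_mul_of_nonneg_right hle (by positivity)
    _ = ((j:ℝ)+1) ^ K * x ^ (j+1) := by rw [Real.rpow_natCast]

lemma geom_summable_stmt11 {x : ℝ} (hx : 0 ≤ x) (hx1 : x < 1) :
    Summable fun k : ℕ => x ^ (k + 1) :=
  (summable_geometric_of_lt_one hx hx1).mul_left x |>.congr fun k => by ring

/-- pointwise expansion of the integrand into a double series -/
lemma pointwise_stmt11 {r p t : ℝ} (ht : 0 < t) :
    t ^ (r - 1) * polyLog p (Real.exp (-t)) / (Real.exp t - 1) =
      ∑' pr : ℕ × ℕ, (1 / ((pr.2 : ℝ) + 1) ^ p) *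
        (t ^ (r - 1) * Real.exp (-(((pr.1 : ℝ) + pr.2 + 2) * t))) := by
  set x : ℝ := Real.exp (-t) with hxdef
  have hx0 : 0 < x := Real.exp_pos _
  have hx1 : x < 1 := by
    rw [hxdef]
    exact Real.exp_lt_one_iff.mpr (by linarith)
  have hexp : Real.exp t - 1 > 0 := by
    have := Real.add_one_le_exp t
    linarith
  have hgeom : (∑' k : ℕ, x ^ (k + 1)) = 1 / (Real.exp t - 1) := by
    have h1 : (∑' k : ℕ, x ^ (k + 1)) = x * ∑' k : ℕ, x ^ k := by
      rw [← tsum_mul_left]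
      exact tsum_congr fun k => by ring
    rw [h1, tsum_geometric_of_lt_one hx0.le hx1]
    rw [hxdef, Real.exp_neg]
    have hE := Real.exp_pos t
    rw [eq_div_iff (by linarith)]
    field_simp
  have hLi : Summable fun j : ℕ => x ^ (j + 1) / ((j : ℝ) + 1) ^ p :=
    polyLog_summable_stmt11 hx0.le hx1 p
  have hg : Summable fun k : ℕ => x ^ (k + 1) := geom_summable_stmt11 hx0.le hx1
  have hprod : Summable fun z : ℕ × ℕ =>
      x ^ (z.1 + 1) * (x ^ (z.2 + 1) / ((z.2 : ℝ) + 1) ^ p) := by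
    apply Summable.mul_of_nonneg hg hLi <;>
      exact Pi.le_def.mpr fun k => by positivity
  have hmul : (∑' k : ℕ, x ^ (k + 1)) * (∑' j : ℕ, x ^ (j + 1) / ((j : ℝ) + 1) ^ p) =
      ∑' z : ℕ × ℕ, x ^ (z.1 + 1) * (x ^ (z.2 + 1) / ((z.2 : ℝ) + 1) ^ p) :=
    Summable.tsum_mul_tsum hg hLi hprod
  have hpl : polyLog p x = ∑' j : ℕ, x ^ (j + 1) / ((j : ℝ) + 1) ^ p := by
    rw [polyLog]
  rw [div_eq_mul_inv, mul_assoc, hpl, ← one_div,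
    mul_comm (∑' j : ℕ, x ^ (j + 1) / ((j : ℝ) + 1) ^ p), ← hgeom, hmul, ← tsum_mul_left]
  refine tsum_congr fun z => ?_
  have hexpand : Real.exp (-(((z.1 : ℝ) + z.2 + 2) * t)) = x ^ (z.1 + 1) * x ^ (z.2 + 1) := by
    rw [hxdef, ← Real.exp_nat_mul, ← Real.exp_nat_mul, ← Real.exp_add]
    congr 1
    push_cast
    ring
  rw [hexpand]
  ring

lemma F_integrableOn_stmt11 {r b : ℝ} (hr : 1 < r) (hb : 0 < b) :
    MeasureTheory.IntegrableOn (fun t : ℝ => t ^ (r - 1) * Real.exp (-(b * t)))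
      (Set.Ioi 0) := by
  have h := integrableOn_rpow_mul_exp_neg_mul_rpow (p := 1) (s := r - 1) (b := b)
    (by linarith) zero_lt_one hb
  exact h.congr_fun (fun x _ => by beta_reduce; rw [Real.rpow_one, neg_mul]) measurableSet_Ioi

theorem stmt11 (r q : ℝ) (hr : 1 < r) (hq : 2 - r < q) :
    zeta2 r q =
      (1 / Real.Gamma r) *
        ∫ t in Set.Ioi (0 : ℝ),
          t ^ (r - 1) * polyLog q (Real.exp (-t)) / (Real.exp t - 1) := by
  have hΓ : 0 < Real.Gamma r := Real.Gamma_pos_of_pos (by linarith)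
  set F : ℕ × ℕ → ℝ → ℝ := fun p t =>
    (1 / ((p.2 : ℝ) + 1) ^ q) * (t ^ (r - 1) * Real.exp (-(((p.1 : ℝ) + p.2 + 2) * t)))
    with hFdef
  have hbpos : ∀ p : ℕ × ℕ, (0:ℝ) < (p.1 : ℝ) + p.2 + 2 := fun p => by positivity
  have hF_int : ∀ p : ℕ × ℕ, MeasureTheory.Integrable (F p)
      (MeasureTheory.volume.restrict (Set.Ioi 0)) := fun p =>
    (F_integrableOn_stmt11 hr (hbpos p)).const_mul _
  have hF_val : ∀ p : ℕ × ℕ, ∫ t in Set.Ioi (0:ℝ), F p t =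
      Real.Gamma r * (1 / (((p.1 : ℝ) + p.2 + 2) ^ r * ((p.2 : ℝ) + 1) ^ q)) := by
    intro p
    rw [hFdef]
    rw [MeasureTheory.integral_const_mul,
      Real.integral_rpow_mul_exp_neg_mul_Ioi (by linarith) (hbpos p)]
    rw [Real.div_rpow zero_le_one (hbpos p).le, Real.one_rpow]
    rw [one_div, one_div, one_div, mul_inv]
    ring
  have hF_norm : ∀ p : ℕ × ℕ,
      (∫ t in Set.Ioi (0:ℝ), ‖F p t‖) = ∫ t in Set.Ioi (0:ℝ), F p t := by
    intro p
    refine MeasureTheory.setIntegral_congr_fun measurableSet_Ioi fun t ht => ?_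
    have ht' : (0:ℝ) < t := ht
    rw [Real.norm_eq_abs, abs_of_nonneg]
    rw [hFdef]
    have : (0:ℝ) < t ^ (r - 1) := Real.rpow_pos_of_pos ht' _
    positivity
  have hsumc : Summable fun p : ℕ × ℕ =>
      1 / (((p.1 : ℝ) + p.2 + 2) ^ r * ((p.2 : ℝ) + 1) ^ q) := aux_summable_stmt11 hr hq
  have hF_sum : Summable fun p : ℕ × ℕ => ∫ t in Set.Ioi (0:ℝ), ‖F p t‖ := by
    refine (hsumc.mul_left (Real.Gamma r)).congr fun p => ?_
    rw [hF_norm p, hF_val p]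
  have hint : (∫ t in Set.Ioi (0 : ℝ),
      t ^ (r - 1) * polyLog q (Real.exp (-t)) / (Real.exp t - 1)) =
      Real.Gamma r * ∑' p : ℕ × ℕ,
        1 / (((p.1 : ℝ) + p.2 + 2) ^ r * ((p.2 : ℝ) + 1) ^ q) := by
    rw [MeasureTheory.setIntegral_congr_fun measurableSet_Ioi
      (fun t (ht : (0:ℝ) < t) => pointwise_stmt11 (p := q) (r := r) ht)]
    rw [← MeasureTheory.integral_tsum_of_summable_integral_norm hF_int hF_sum]
    rw [tsum_congr hF_val, tsum_mul_left]
  rw [hint, zeta2_eq_stmt11]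
  field_simp
end

section
/- For real k > 3/2, the sum over n ≥ 1 of (ζ(k) − Σ_{i=1}^n 1/i^k)^2 equals ζ(2k−1) − ζ(k)^2 + (2/Γ(k)) ∫_0^∞ t^{k−1} Li_{k−1}(e^{−t})/(e^t − 1) dt. -/
open scoped BigOperators

open Filter Topology MeasureTheory Set

namespace Stmt13Aux

noncomputable def zf (k : ℝ) (i : ℕ) : ℝ := 1 / ((i : ℝ) + 1) ^ k

noncomputable def zT (k : ℝ) (n : ℕ) : ℝ := ∑' i : ℕ, zf k (i + n)

lemma zf_nonneg (k : ℝ) (i : ℕ) : 0 ≤ zf k i := by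
  unfold zf; positivity

lemma zf_eq (k : ℝ) (i : ℕ) : zf k i = ((i : ℝ) + 1) ^ (-k) := by
  rw [zf, Real.rpow_neg (by positivity), one_div]

lemma summable_zf {k : ℝ} (hk : 1 < k) : Summable (zf k) := by
  have h := (summable_nat_add_iff 1).mpr (Real.summable_one_div_nat_rpow.mpr hk)
  refine h.congr fun i => ?_
  simp only [zf]
  push_cast
  ring_nf

lemma summable_zf_shift {k : ℝ} (hk : 1 < k) (n : ℕ) :
    Summable fun i => zf k (i + n) :=
  (summable_nat_add_iff n).mpr (summable_zf hk)

lemma zetaTail_eq {k : ℝ} (hk : 1 < k) (n : ℕ) : zetaTail k n = zT k n := by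
  have h := Summable.sum_add_tsum_nat_add (f := zf k) n (summable_zf hk)
  have h2 : zetaTail k n = (∑' i, zf k i) - ∑ i ∈ Finset.range n, zf k i := rfl
  rw [h2, ← h, add_sub_cancel_left]
  rfl

lemma zT_nonneg (k : ℝ) (n : ℕ) : 0 ≤ zT k n :=
  tsum_nonneg fun i => zf_nonneg k _

lemma zT_succ {k : ℝ} (hk : 1 < k) (n : ℕ) : zT k n = zf k n + zT k (n + 1) := by
  rw [zT, Summable.tsum_eq_zero_add (summable_zf_shift hk n)]
  congr 1
  · rw [zero_add]
  · rw [zT]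
    exact tsum_congr fun i => by rw [show i + 1 + n = i + (n + 1) by omega]

lemma zT_tendsto {k : ℝ} (hk : 1 < k) : Tendsto (zT k) atTop (𝓝 0) := by
  have h1 := (summable_zf hk).hasSum.tendsto_sum_nat
  have h2 : Tendsto (fun n => (∑' i, zf k i) - ∑ i ∈ Finset.range n, zf k i)
      atTop (𝓝 ((∑' i, zf k i) - ∑' i, zf k i)) := tendsto_const_nhds.sub h1
  rw [sub_self] at h2
  exact h2.congr fun n => zetaTail_eq hk n

end Stmt13Aux

lemma rpow_tail_step {k : ℝ} (hk : 1 < k) (j : ℕ) (hj : 1 ≤ j) :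
    ((j : ℝ) + 1) ^ (-k) ≤ ((j : ℝ) ^ (1 - k) - ((j : ℝ) + 1) ^ (1 - k)) / (k - 1) := by
  have hj' : (1 : ℝ) ≤ (j : ℝ) := by exact_mod_cast hj
  have hj0 : (0 : ℝ) < j := by linarith
  have hcont : ContinuousOn (fun x : ℝ => x ^ (1 - k)) (Icc (j : ℝ) ((j : ℝ) + 1)) := by
    intro x hx
    have hx0 : x ≠ 0 := by have := hx.1; intro h; rw [h] at this; linarith
    exact (Real.continuousAt_rpow_const x (1 - k) (Or.inl hx0)).continuousWithinAt
  have hderiv : ∀ x ∈ Ioo (j : ℝ) ((j : ℝ) + 1),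
      HasDerivAt (fun x : ℝ => x ^ (1 - k)) ((1 - k) * x ^ (1 - k - 1)) x := by
    intro x hx
    have hx0 : x ≠ 0 := by have := hx.1; intro h; rw [h] at this; linarith
    exact Real.hasDerivAt_rpow_const (Or.inl hx0)
  obtain ⟨c, hc, hc'⟩ := exists_hasDerivAt_eq_slope (fun x : ℝ => x ^ (1 - k))
      (fun x => (1 - k) * x ^ (1 - k - 1)) (show (j : ℝ) < (j : ℝ) + 1 by linarith)
      hcont hderiv
  have hcpos : (0 : ℝ) < c := lt_trans hj0 hc.1
  rw [show ((j : ℝ) + 1) - (j : ℝ) = 1 by ring, div_one, show (1 : ℝ) - k - 1 = -k by ring] at hc'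
  have hmono : ((j : ℝ) + 1) ^ (-k) ≤ c ^ (-k) :=
    Real.rpow_le_rpow_of_nonpos hcpos (le_of_lt hc.2) (by linarith)
  have hdd : (j : ℝ) ^ (1 - k) - ((j : ℝ) + 1) ^ (1 - k) = (k - 1) * c ^ (-k) := by
    have := hc'
    nlinarith [this]
  rw [hdd, mul_comm, mul_div_assoc, div_self (by linarith : k - 1 ≠ 0), mul_one]
  exact hmono
lemma zT_bound {k : ℝ} (hk : 1 < k) (n : ℕ) :
    Stmt13Aux.zT k (n + 1) ≤ ((n : ℝ) + 1) ^ (1 - k) / (k - 1) := by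
  classical
  set g : ℕ → ℝ := fun m => ((m : ℝ)) ^ (1 - k) with hg
  have hposm : ∀ m : ℕ, 1 ≤ m → (0 : ℝ) < (m : ℝ) := fun m hm => by exact_mod_cast Nat.pos_of_ne_zero (by omega)
  have hbn : ∀ i : ℕ, g ((i + 1) + (n + 1)) ≤ g (i + (n + 1)) := by
    intro i
    refine Real.rpow_le_rpow_of_nonpos (hposm _ (by omega)) ?_ (by linarith)
    push_cast; linarith
  have hb0 : Tendsto (fun i : ℕ => g (i + (n + 1))) atTop (𝓝 0) := by
    have h1 : Tendsto (fun i : ℕ => ((i + (n + 1) : ℕ) : ℝ)) atTop atTop :=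
      tendsto_natCast_atTop_atTop.comp (tendsto_add_atTop_nat (n + 1))
    have h2 := (tendsto_rpow_neg_atTop (by linarith : (0:ℝ) < k - 1)).comp h1
    refine h2.congr fun i => ?_
    simp only [Function.comp, hg]
    rw [show -(k - 1) = 1 - k by ring]
  have hts : HasSum (fun i => g (i + (n + 1)) - g ((i + 1) + (n + 1))) (g (n + 1)) := by
    rw [hasSum_iff_tendsto_nat_of_nonneg (fun i => by linarith [hbn i])]
    have hps : ∀ N : ℕ, ∑ i ∈ Finset.range N, (g (i + (n + 1)) - g ((i + 1) + (n + 1)))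
        = g (0 + (n + 1)) - g (N + (n + 1)) :=
      fun N => Finset.sum_range_sub' (fun i => g (i + (n + 1))) N
    simp only [hps, zero_add]
    simpa using tendsto_const_nhds.sub hb0
  have hle : ∀ i : ℕ, Stmt13Aux.zf k (i + (n + 1))
      ≤ (g (i + (n + 1)) - g ((i + 1) + (n + 1))) / (k - 1) := by
    intro i
    have h := rpow_tail_step hk (i + (n + 1)) (by omega)
    rw [Stmt13Aux.zf_eq, show (i + 1) + (n + 1) = (i + (n + 1)) + 1 from by omega]
    simp only [hg]
    push_cast
    push_cast at h
    exact h
  calc Stmt13Aux.zT k (n + 1) = ∑' i, Stmt13Aux.zf k (i + (n + 1)) := rfl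
    _ ≤ ∑' i, (g (i + (n + 1)) - g ((i + 1) + (n + 1))) / (k - 1) :=
        Summable.tsum_le_tsum hle (Stmt13Aux.summable_zf_shift hk (n + 1)) (hts.div_const _).summable
    _ = g (n + 1) / (k - 1) := (hts.div_const _).tsum_eq
    _ = ((n : ℝ) + 1) ^ (1 - k) / (k - 1) := by rw [hg]; push_cast; ring_nf

namespace Stmt13Aux

noncomputable def zw (k : ℝ) (m : ℕ) : ℝ := ((m : ℝ) + 1) ^ (1 - k) * zT k (m + 1)

lemma zw_nonneg (k : ℝ) (m : ℕ) : 0 ≤ zw k m :=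
  mul_nonneg (Real.rpow_nonneg (by positivity) _) (zT_nonneg k _)

lemma summable_aux {a : ℝ} (ha : 1 < a) :
    Summable (fun m : ℕ => ((m : ℝ) + 1) ^ (-a)) :=
  (summable_zf ha).congr fun i => zf_eq a i

lemma summable_zw {k : ℝ} (hk : 3 / 2 < k) : Summable (zw k) := by
  have hk1 : 1 < k := by linarith
  refine Summable.of_nonneg_of_le (fun m => zw_nonneg k m) (fun m => ?_)
    (((summable_aux (a := 2 * k - 2) (by linarith)).mul_right (1 / (k - 1))))
  have hb : (0 : ℝ) < (m : ℝ) + 1 := by positivity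
  calc zw k m ≤ ((m : ℝ) + 1) ^ (1 - k) * (((m : ℝ) + 1) ^ (1 - k) / (k - 1)) :=
        mul_le_mul_of_nonneg_left (zT_bound hk1 m) (Real.rpow_nonneg hb.le _)
    _ = ((m : ℝ) + 1) ^ (-(2 * k - 2)) * (1 / (k - 1)) := by
        rw [show -(2 * k - 2) = (1 - k) + (1 - k) by ring, Real.rpow_add hb]
        ring

noncomputable def zc (k : ℝ) (m : ℕ) : ℝ := zf k m * (zf k m + 2 * zT k (m + 1))

lemma zc_nonneg (k : ℝ) (m : ℕ) : 0 ≤ zc k m :=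
  mul_nonneg (zf_nonneg k m)
    (add_nonneg (zf_nonneg k m) (mul_nonneg two_pos.le (zT_nonneg k _)))

lemma mul_zc {k : ℝ} (m : ℕ) :
    ((m : ℝ) + 1) * zc k m = ((m : ℝ) + 1) ^ (-(2 * k - 1)) + 2 * zw k m := by
  have hb : (0 : ℝ) < (m : ℝ) + 1 := by positivity
  rw [zc, zf_eq, zw]
  have h1 : ((m : ℝ) + 1) * (((m : ℝ) + 1) ^ (-k) * ((m : ℝ) + 1) ^ (-k))
      = ((m : ℝ) + 1) ^ (-(2 * k - 1)) := by
    rw [show -(2 * k - 1) = 1 + (-k + -k) by ring, Real.rpow_add hb, Real.rpow_add hb,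
      Real.rpow_one]
  have h2 : ((m : ℝ) + 1) * ((m : ℝ) + 1) ^ (-k) = ((m : ℝ) + 1) ^ (1 - k) := by
    rw [show (1 : ℝ) - k = 1 + -k by ring, Real.rpow_add hb, Real.rpow_one]
  calc ((m : ℝ) + 1) * (((m : ℝ) + 1) ^ (-k) * (((m : ℝ) + 1) ^ (-k) + 2 * zT k (m + 1)))
      = (((m : ℝ) + 1) * (((m : ℝ) + 1) ^ (-k) * ((m : ℝ) + 1) ^ (-k)))
        + 2 * ((((m : ℝ) + 1) * ((m : ℝ) + 1) ^ (-k)) * zT k (m + 1)) := by ring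
    _ = ((m : ℝ) + 1) ^ (-(2 * k - 1)) + 2 * (((m : ℝ) + 1) ^ (1 - k) * zT k (m + 1)) := by
        rw [h1, h2]

lemma summable_mzc {k : ℝ} (hk : 3 / 2 < k) :
    Summable fun m : ℕ => ((m : ℝ) + 1) * zc k m :=
  (((summable_aux (a := 2 * k - 1) (by linarith)).add
    ((summable_zw hk).mul_left 2))).congr fun m => (mul_zc m).symm

lemma hasSum_zc {k : ℝ} (hk : 1 < k) (n : ℕ) :
    HasSum (fun i => zc k (n + i)) (zT k n ^ 2) := by
  have key : ∀ i, zc k (n + i) = zT k (n + i) ^ 2 - zT k (n + (i + 1)) ^ 2 := by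
    intro i
    have h := zT_succ hk (n + i)
    rw [show n + (i + 1) = n + i + 1 from by omega, zc, h]
    ring
  have hfun : (fun i => zc k (n + i))
      = fun i => zT k (n + i) ^ 2 - zT k (n + (i + 1)) ^ 2 := funext key
  rw [hfun]
  rw [hasSum_iff_tendsto_nat_of_nonneg (fun i => by rw [← key]; exact zc_nonneg k _)]
  have hps : ∀ N : ℕ, ∑ i ∈ Finset.range N, (zT k (n + i) ^ 2 - zT k (n + (i + 1)) ^ 2)
      = zT k (n + 0) ^ 2 - zT k (n + N) ^ 2 :=
    fun N => Finset.sum_range_sub' (fun i => zT k (n + i) ^ 2) N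
  simp only [hps, add_zero]
  have hb0 : Tendsto (fun N : ℕ => zT k (n + N) ^ 2) atTop (𝓝 0) := by
    have h1 : Tendsto (fun N : ℕ => zT k (n + N)) atTop (𝓝 0) := by
      have := (zT_tendsto hk).comp (tendsto_add_atTop_nat n)
      exact this.congr fun N => by simp [Function.comp, Nat.add_comm]
    simpa using h1.pow 2
  simpa using tendsto_const_nhds.sub hb0

def natEquiv : ℕ × ℕ ≃ Σ m : ℕ, Fin (m + 1) where
  toFun p := ⟨p.1 + p.2, ⟨p.1, by omega⟩⟩
  invFun s := (s.2.1, s.1 - s.2.1)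
  left_inv p := by
    cases p with
    | mk a b => simp
  right_inv s := by
    obtain ⟨m, j⟩ := s
    dsimp only
    have h : (j : ℕ) + (m - (j : ℕ)) = m := by omega
    refine Sigma.ext h ?_
    rw [Fin.heq_ext_iff (by dsimp only; omega)]

lemma tsum_prod_count {g : ℕ → ℝ} (hg : ∀ m, 0 ≤ g m)
    (hs : Summable fun m : ℕ => ((m : ℝ) + 1) * g m) :
    Summable (fun p : ℕ × ℕ => g (p.1 + p.2)) ∧
      ∑' p : ℕ × ℕ, g (p.1 + p.2) = ∑' m : ℕ, ((m : ℝ) + 1) * g m := by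
  set F : (Σ m : ℕ, Fin (m + 1)) → ℝ := fun s => g s.1 with hF
  have hfiber : ∀ m : ℕ, ∑' _j : Fin (m + 1), g m = ((m : ℝ) + 1) * g m := by
    intro m
    rw [tsum_fintype]
    simp only [Finset.sum_const, Finset.card_univ, Fintype.card_fin, nsmul_eq_mul]
    push_cast
    ring
  have hFs : Summable F := by
    apply (summable_sigma_of_nonneg (fun s => hg _)).mpr
    exact ⟨fun m => (hasSum_fintype _).summable, hs.congr fun m => (hfiber m).symm⟩
  have heq : (fun p : ℕ × ℕ => g (p.1 + p.2)) = F ∘ natEquiv := rfl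
  constructor
  · rw [heq]; exact natEquiv.summable_iff.mpr hFs
  · calc ∑' p : ℕ × ℕ, g (p.1 + p.2) = ∑' s, F s := natEquiv.tsum_eq F
      _ = ∑' m, ∑' j : Fin (m + 1), F ⟨m, j⟩ := Summable.tsum_sigma hFs
      _ = ∑' m : ℕ, ((m : ℝ) + 1) * g m := tsum_congr fun m => hfiber m

lemma sum_sq_eq {k : ℝ} (hk : 3 / 2 < k) :
    Summable (fun n : ℕ => zT k n ^ 2) ∧
      ∑' n : ℕ, zT k n ^ 2 = ∑' m : ℕ, ((m : ℝ) + 1) * zc k m := by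
  have hk1 : 1 < k := by linarith
  obtain ⟨hsp, hval⟩ := tsum_prod_count (fun m => zc_nonneg k m) (summable_mzc hk)
  have houter := (summable_prod_of_nonneg (fun p => zc_nonneg k _)).mp hsp
  have hTsq : ∀ n, ∑' i, zc k (n + i) = zT k n ^ 2 := fun n => (hasSum_zc hk1 n).tsum_eq
  refine ⟨houter.2.congr fun n => hTsq n, ?_⟩
  calc ∑' n : ℕ, zT k n ^ 2 = ∑' n, ∑' i, zc k (n + i) := tsum_congr fun n => (hTsq n).symm
    _ = ∑' p : ℕ × ℕ, zc k (p.1 + p.2) := (Summable.tsum_prod hsp).symm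
    _ = ∑' m : ℕ, ((m : ℝ) + 1) * zc k m := hval

lemma rzeta_eq (a : ℝ) : rzeta a = ∑' m : ℕ, ((m : ℝ) + 1) ^ (-a) :=
  tsum_congr fun m => by rw [Real.rpow_neg (by positivity), one_div]

end Stmt13Aux

namespace Stmt13Aux

noncomputable def hfun (k : ℝ) (p : ℕ × ℕ) (t : ℝ) : ℝ :=
  ((p.1 : ℝ) + 1) ^ (1 - k) * (t ^ (k - 1) * Real.exp (-(((p.1 : ℝ) + (p.2 : ℝ) + 2) * t)))

lemma cpos (p : ℕ × ℕ) : (0 : ℝ) < (p.1 : ℝ) + (p.2 : ℝ) + 2 := by positivity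

lemma hfun_nonneg (k : ℝ) (p : ℕ × ℕ) {t : ℝ} (ht : 0 ≤ t) : 0 ≤ hfun k p t := by
  unfold hfun
  have h1 : (0:ℝ) ≤ ((p.1 : ℝ) + 1) ^ (1 - k) := Real.rpow_nonneg (by positivity) _
  have h2 : (0:ℝ) ≤ t ^ (k - 1) := Real.rpow_nonneg ht _
  positivity

lemma hfun_integrable {k : ℝ} (hk : 0 < k) (p : ℕ × ℕ) : IntegrableOn (hfun k p) (Ioi (0:ℝ)) := by
  have hbase : IntegrableOn
      (fun t : ℝ => t ^ (k - 1) * Real.exp (-(((p.1 : ℝ) + (p.2 : ℝ) + 2) * t))) (Ioi 0) := by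
    have h := integrableOn_rpow_mul_exp_neg_mul_rpow (s := k - 1) (p := 1)
      (b := (p.1 : ℝ) + (p.2 : ℝ) + 2) (by linarith) one_pos (cpos p)
    refine h.congr_fun (fun x _ => ?_) measurableSet_Ioi
    beta_reduce
    rw [Real.rpow_one, neg_mul]
  exact hbase.const_mul _

lemma hfun_integral {k : ℝ} (hk : 0 < k) (p : ℕ × ℕ) :
    ∫ t in Ioi (0:ℝ), hfun k p t
      = Real.Gamma k * (((p.1 : ℝ) + 1) ^ (1 - k) * (((p.1 : ℝ) + (p.2 : ℝ) + 2)) ^ (-k)) := by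
  unfold hfun
  rw [MeasureTheory.integral_const_mul,
    Real.integral_rpow_mul_exp_neg_mul_Ioi hk (cpos p)]
  rw [one_div, Real.inv_rpow (cpos p).le, ← Real.rpow_neg (cpos p).le]
  ring

end Stmt13Aux

namespace Stmt13Aux

noncomputable def Jf (k : ℝ) (p : ℕ × ℕ) : ℝ :=
  ((p.1 : ℝ) + 1) ^ (1 - k) * (((p.1 : ℝ) + (p.2 : ℝ) + 2)) ^ (-k)

lemma Jf_nonneg (k : ℝ) (p : ℕ × ℕ) : 0 ≤ Jf k p :=
  mul_nonneg (Real.rpow_nonneg (by positivity) _) (Real.rpow_nonneg (cpos p).le _)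

lemma Jf_slice (k : ℝ) (j m : ℕ) :
    Jf k (j, m) = ((j : ℝ) + 1) ^ (1 - k) * zf k (m + (j + 1)) := by
  unfold Jf
  rw [zf_eq]
  congr 2
  push_cast
  ring

lemma summable_Jf {k : ℝ} (hk : 3 / 2 < k) :
    Summable (Jf k) ∧ ∑' p : ℕ × ℕ, Jf k p = ∑' j : ℕ, zw k j := by
  have hk1 : 1 < k := by linarith
  have hslice : ∀ j : ℕ, Summable (fun m : ℕ => Jf k (j, m)) := by
    intro j
    refine (((summable_zf_shift hk1 (j + 1)).mul_left (((j : ℝ) + 1) ^ (1 - k)))).congr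
      fun m => (Jf_slice k j m).symm
  have hsliceval : ∀ j : ℕ, ∑' m : ℕ, Jf k (j, m) = zw k j := by
    intro j
    calc ∑' m : ℕ, Jf k (j, m)
        = ∑' m : ℕ, ((j : ℝ) + 1) ^ (1 - k) * zf k (m + (j + 1)) :=
          tsum_congr fun m => Jf_slice k j m
      _ = ((j : ℝ) + 1) ^ (1 - k) * ∑' m : ℕ, zf k (m + (j + 1)) := tsum_mul_left
      _ = zw k j := rfl
  have hsum : Summable (Jf k) := by
    apply (summable_prod_of_nonneg (fun p => Jf_nonneg k p)).mpr
    exact ⟨hslice, (summable_zw hk).congr fun j => (hsliceval j).symm⟩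
  refine ⟨hsum, ?_⟩
  calc ∑' p : ℕ × ℕ, Jf k p = ∑' j : ℕ, ∑' m : ℕ, Jf k (j, m) := Summable.tsum_prod hsum
    _ = ∑' j : ℕ, zw k j := tsum_congr hsliceval

end Stmt13Aux

namespace Stmt13Aux

lemma pointwise_eq {k : ℝ} (hk : 1 < k) {t : ℝ} (ht : 0 < t) :
    t ^ (k - 1) * polyLog (k - 1) (Real.exp (-t)) / (Real.exp t - 1)
      = ∑' p : ℕ × ℕ, hfun k p t := by
  set r := Real.exp (-t) with hrdef
  have hr0 : 0 < r := Real.exp_pos _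
  have hr1 : r < 1 := Real.exp_lt_one_iff.mpr (by linarith)
  have het : 0 < Real.exp t - 1 := by
    have h1 : Real.exp 0 < Real.exp t := Real.exp_lt_exp.mpr ht
    rw [Real.exp_zero] at h1
    linarith
  set A : ℕ → ℝ := fun j => r ^ (j + 1) / ((j : ℝ) + 1) ^ (k - 1) with hA
  set B : ℕ → ℝ := fun m => r ^ (m + 1) with hB
  have hBs : Summable B := by
    refine ((summable_geometric_of_lt_one hr0.le hr1).mul_left r).congr fun m => ?_
    simp only [hB]
    rw [pow_succ]
    ring
  have hAle : ∀ j, ‖A j‖ ≤ B j := by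
    intro j
    have hd : (1 : ℝ) ≤ ((j : ℝ) + 1) ^ (k - 1) :=
      Real.one_le_rpow (by push_cast; linarith) (by linarith)
    rw [Real.norm_of_nonneg (by positivity)]
    exact div_le_self (by positivity) hd
  have hAnorm : Summable fun j => ‖A j‖ :=
    Summable.of_nonneg_of_le (fun j => norm_nonneg _) hAle hBs
  have hBnorm : Summable fun m => ‖B m‖ := by
    refine hBs.congr fun m => ?_
    rw [Real.norm_of_nonneg (by positivity)]
  have hprod := tsum_mul_tsum_of_summable_norm hAnorm hBnorm
  have hpoly : polyLog (k - 1) r = ∑' j, A j := rfl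
  have hgeo : (Real.exp t - 1)⁻¹ = ∑' m, B m := by
    have h1 : ∑' m, B m = r * (1 - r)⁻¹ := by
      calc ∑' m, B m = ∑' m, r * r ^ m := tsum_congr fun m => by show r ^ (m + 1) = r * r ^ m; rw [pow_succ]; ring
        _ = r * ∑' m : ℕ, r ^ m := tsum_mul_left
        _ = r * (1 - r)⁻¹ := by rw [tsum_geometric_of_lt_one hr0.le hr1]
    rw [h1, hrdef, Real.exp_neg]
    have he0 : Real.exp t ≠ 0 := (Real.exp_pos t).ne'
    have he1 : Real.exp t - 1 ≠ 0 := het.ne'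
    field_simp
  calc t ^ (k - 1) * polyLog (k - 1) r / (Real.exp t - 1)
      = t ^ (k - 1) * ((∑' j, A j) * (∑' m, B m)) := by
        rw [hpoly, div_eq_mul_inv, hgeo]; ring
    _ = t ^ (k - 1) * ∑' p : ℕ × ℕ, A p.1 * B p.2 := by rw [hprod]
    _ = ∑' p : ℕ × ℕ, t ^ (k - 1) * (A p.1 * B p.2) := tsum_mul_left.symm
    _ = ∑' p : ℕ × ℕ, hfun k p t := by
        refine tsum_congr fun p => ?_
        simp only [hA, hB, hfun]
        have hepow : r ^ (p.1 + 1) * r ^ (p.2 + 1)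
            = Real.exp (-(((p.1 : ℝ) + (p.2 : ℝ) + 2) * t)) := by
          rw [hrdef, ← Real.exp_nat_mul, ← Real.exp_nat_mul, ← Real.exp_add]
          congr 1
          push_cast
          ring
        have hpw : ((p.1 : ℝ) + 1) ^ (1 - k) = (((p.1 : ℝ) + 1) ^ (k - 1))⁻¹ := by
          rw [show (1 : ℝ) - k = -(k - 1) by ring, Real.rpow_neg (by positivity)]
        rw [hpw, ← hepow]
        field_simp

end Stmt13Aux

namespace Stmt13Aux

lemma integral_eq {k : ℝ} (hk : 3 / 2 < k) :
    (∫ t in Ioi (0:ℝ), t ^ (k - 1) * polyLog (k - 1) (Real.exp (-t)) / (Real.exp t - 1))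
      = Real.Gamma k * ∑' j : ℕ, zw k j := by
  have hk1 : 1 < k := by linarith
  have hk0 : 0 < k := by linarith
  obtain ⟨hJs, hJval⟩ := summable_Jf hk
  have hmeas : ∀ p : ℕ × ℕ,
      AEStronglyMeasurable (hfun k p) (volume.restrict (Ioi (0:ℝ))) := by
    intro p
    refine ContinuousOn.aestronglyMeasurable ?_ measurableSet_Ioi
    refine ContinuousOn.mul continuousOn_const (ContinuousOn.mul ?_ ?_)
    · exact fun t htp => (Real.continuousAt_rpow_const t (k - 1)
        (Or.inl (ne_of_gt htp))).continuousWithinAt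
    · exact (Real.continuous_exp.comp (continuous_const.mul continuous_id).neg).continuousOn
  have hGJ : Summable fun p : ℕ × ℕ => Real.Gamma k * Jf k p := hJs.mul_left _
  have hlint : ∀ p : ℕ × ℕ, ∫⁻ t, ‖hfun k p t‖ₑ ∂(volume.restrict (Ioi (0:ℝ)))
      = ENNReal.ofReal (Real.Gamma k * Jf k p) := by
    intro p
    rw [← MeasureTheory.ofReal_integral_norm_eq_lintegral_enorm (hfun_integrable hk0 p)]
    congr 1
    rw [setIntegral_congr_fun measurableSet_Ioi
      (fun t ht => Real.norm_of_nonneg (hfun_nonneg k p (le_of_lt ht)))]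
    rw [hfun_integral hk0 p]
    rfl
  have hfin : ∑' p : ℕ × ℕ, ∫⁻ t, ‖hfun k p t‖ₑ ∂(volume.restrict (Ioi (0:ℝ))) ≠ ⊤ := by
    simp only [hlint]
    rw [← ENNReal.ofReal_tsum_of_nonneg
      (fun p => mul_nonneg (Real.Gamma_pos_of_pos hk0).le (Jf_nonneg k p)) hGJ]
    exact ENNReal.ofReal_ne_top
  rw [setIntegral_congr_fun measurableSet_Ioi (fun t ht => pointwise_eq hk1 ht)]
  rw [MeasureTheory.integral_tsum hmeas hfin]
  calc ∑' p : ℕ × ℕ, ∫ t in Ioi (0:ℝ), hfun k p t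
      = ∑' p : ℕ × ℕ, Real.Gamma k * Jf k p :=
        tsum_congr fun p => by rw [hfun_integral hk0 p]; rfl
    _ = Real.Gamma k * ∑' p : ℕ × ℕ, Jf k p := tsum_mul_left
    _ = Real.Gamma k * ∑' j : ℕ, zw k j := by rw [hJval]

end Stmt13Aux

open Stmt13Aux in
theorem stmt13 (k : ℝ) (hk : 3 / 2 < k) :
    ∑' n : ℕ, zetaTail k (n + 1) ^ 2 =
      rzeta (2 * k - 1) - rzeta k ^ 2 +
        (2 / Real.Gamma k) *
          ∫ t in Set.Ioi (0 : ℝ),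
            t ^ (k - 1) * polyLog (k - 1) (Real.exp (-t)) / (Real.exp t - 1) := by
  have hk1 : 1 < k := by linarith
  have hΓ : Real.Gamma k ≠ 0 := (Real.Gamma_pos_of_pos (by linarith)).ne'
  obtain ⟨hsum, hval⟩ := sum_sq_eq hk
  have hmc : ∑' m : ℕ, ((m : ℝ) + 1) * zc k m
      = rzeta (2 * k - 1) + 2 * ∑' j : ℕ, zw k j := by
    calc ∑' m : ℕ, ((m : ℝ) + 1) * zc k m
        = ∑' m : ℕ, (((m : ℝ) + 1) ^ (-(2 * k - 1)) + 2 * zw k m) :=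
          tsum_congr fun m => mul_zc m
      _ = (∑' m : ℕ, ((m : ℝ) + 1) ^ (-(2 * k - 1))) + ∑' m : ℕ, 2 * zw k m :=
          Summable.tsum_add (summable_aux (by linarith)) ((summable_zw hk).mul_left 2)
      _ = rzeta (2 * k - 1) + 2 * ∑' j : ℕ, zw k j := by
          rw [tsum_mul_left, ← rzeta_eq]
  have hshift : ∑' n : ℕ, zT k n ^ 2 = zT k 0 ^ 2 + ∑' n : ℕ, zT k (n + 1) ^ 2 :=
    Summable.tsum_eq_zero_add hsum
  have hT0 : zT k 0 = rzeta k := by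
    rw [← zetaTail_eq hk1 0]
    unfold zetaTail
    simp
  have hLHS : ∑' n : ℕ, zetaTail k (n + 1) ^ 2 = ∑' n : ℕ, zT k (n + 1) ^ 2 :=
    tsum_congr fun n => by rw [zetaTail_eq hk1]
  have hkey : ∑' n : ℕ, zT k (n + 1) ^ 2
      = rzeta (2 * k - 1) + 2 * (∑' j : ℕ, zw k j) - rzeta k ^ 2 := by
    have h1 := hval
    rw [hmc, hshift, hT0] at h1
    linarith
  rw [hLHS, hkey, integral_eq hk]
  field_simp
  ring
end
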